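/- arXiv:1307.0120 — 6 statements merged into one kernel-verified Lean document; each statement's English description precedes it below -/
import Mathlib

section
/- Let (X,f) be a dynamical system with X a compact metric space and f : X → X continuous, and let A ⊆ X be a closed set with f(A) ⊆ A which contains the measure center of f. If the restriction f|_A : A → A has the average shadowing property on A, then f has the average shadowing property on X. -/
open Filter Metric Set MeasureTheory Topology

section Defs

variable {X : Type*} [MetricSpace X]

/-- The Bowen ball of radius `ε` centered at `x` along a finite set of times `Λ`. -/
def bowenBallAlong (f : X → X) (Λ : Finset ℕ) (x : X) (ε : ℝ) : Set X :=
  {y | ∀ j ∈ Λ, dist (f^[j] x) (f^[j] y) < ε}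

/-- `g` is a mistake function with threshold `ε₀`. -/
structure IsMistakeFun (g : ℕ → ℝ → ℕ) (ε₀ : ℝ) : Prop where
  pos : 0 < ε₀
  mono : ∀ n : ℕ, ∀ ε : ℝ, 0 < ε → ε ≤ ε₀ → g n ε ≤ g (n + 1) ε
  small : ∀ ε : ℝ, 0 < ε → ε ≤ ε₀ →
    Tendsto (fun n : ℕ => (g n ε : ℝ) / n) atTop (nhds 0)
  ext : ∀ n : ℕ, ∀ ε : ℝ, ε₀ < ε → g n ε = g n ε₀

/-- The `(g;n,ε)`-Bowen ball `B_n(g;x,ε)`: union of Bowen balls along all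
`Λ ⊆ {0,…,n-1}` with `#Λ ≥ n - g(n,ε)`. -/
def mistakeBowenBall (f : X → X) (g : ℕ → ℝ → ℕ) (n : ℕ) (x : X) (ε : ℝ) : Set X :=
  ⋃ Λ ∈ {Λ : Finset ℕ | Λ ⊆ Finset.range n ∧ n - g n ε ≤ Λ.card},
    bowenBallAlong f Λ x ε

/-- Almost specification property with given mistake function `g` and gap function `kg`. -/
def AlmostSpecWith (f : X → X) (g : ℕ → ℝ → ℕ) (kg : ℝ → ℕ) : Prop :=
  ∀ m : ℕ, 1 ≤ m → ∀ (ε : ℕ → ℝ) (x : ℕ → X) (nseq : ℕ → ℕ),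
    (∀ j, 1 ≤ j → j ≤ m → 0 < ε j) →
    (∀ j, 1 ≤ j → j ≤ m → kg (ε j) ≤ nseq j) →
    ∃ z : X, ∀ j, 1 ≤ j → j ≤ m →
      f^[∑ s ∈ Finset.Ico 1 j, nseq s] z ∈ mistakeBowenBall f g (nseq j) (x j) (ε j)

/-- The almost specification property. -/
def AlmostSpec (f : X → X) : Prop :=
  ∃ (g : ℕ → ℝ → ℕ) (ε₀ : ℝ) (kg : ℝ → ℕ),
    IsMistakeFun g ε₀ ∧ AlmostSpecWith f g kg

/-- `{x_n}` is a `δ`-average-pseudo-orbit of `f`. -/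
def AvgPseudoOrbit (f : X → X) (δ : ℝ) (x : ℕ → X) : Prop :=
  ∃ N : ℕ, 0 < N ∧ ∀ n : ℕ, N ≤ n → ∀ k : ℕ,
    (∑ i ∈ Finset.range n, dist (f (x (i + k))) (x (i + k + 1))) / n < δ

/-- `{x_n}` is `ε`-shadowed in average by `y`. -/
def ShadowedInAvg (f : X → X) (ε : ℝ) (x : ℕ → X) (y : X) : Prop :=
  limsup (fun n : ℕ => (∑ i ∈ Finset.range n, dist (f^[i] y) (x i)) / n) atTop < ε

/-- The average shadowing property. -/
def AvgShadowing (f : X → X) : Prop :=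
  ∀ ε : ℝ, 0 < ε → ∃ δ : ℝ, 0 < δ ∧
    ∀ x : ℕ → X, AvgPseudoOrbit f δ x → ∃ y : X, ShadowedInAvg f ε x y

/-- `{x_n}` is an asymptotic average pseudo-orbit of `f`. -/
def AsympAvgPseudoOrbit (f : X → X) (x : ℕ → X) : Prop :=
  Tendsto (fun n : ℕ => (∑ i ∈ Finset.range n, dist (f (x i)) (x (i + 1))) / n)
    atTop (nhds 0)

/-- `{x_n}` is asymptotically shadowed in average by `y`. -/
def AsympShadowedInAvg (f : X → X) (x : ℕ → X) (y : X) : Prop :=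
  Tendsto (fun n : ℕ => (∑ i ∈ Finset.range n, dist (f^[i] y) (x i)) / n)
    atTop (nhds 0)

/-- The asymptotic average shadowing property. -/
def AsympAvgShadowing (f : X → X) : Prop :=
  ∀ x : ℕ → X, AsympAvgPseudoOrbit f x → ∃ y : X, AsympShadowedInAvg f x y

/-- An infinite `δ`-pseudo-orbit. -/
def PseudoOrbit (f : X → X) (δ : ℝ) (x : ℕ → X) : Prop :=
  ∀ i : ℕ, dist (f (x i)) (x (i + 1)) < δ

/-- There exists a finite `δ`-pseudo-orbit of length `n` from `x` to `y`. -/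
def FinChain (f : X → X) (δ : ℝ) (n : ℕ) (x y : X) : Prop :=
  ∃ c : ℕ → X, c 0 = x ∧ c n = y ∧ ∀ i < n, dist (f (c i)) (c (i + 1)) < δ

/-- Chain transitivity. -/
def ChainTransitive (f : X → X) : Prop :=
  ∀ δ : ℝ, 0 < δ → ∀ x y : X, ∃ n : ℕ, 0 < n ∧ FinChain f δ n x y

/-- Chain mixing. -/
def ChainMixing (f : X → X) : Prop :=
  ∀ δ : ℝ, 0 < δ → ∀ x y : X, ∃ N : ℕ, 0 < N ∧ ∀ n : ℕ, N ≤ n → FinChain f δ n x y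

/-- The shadowing property. -/
def Shadowing (f : X → X) : Prop :=
  ∀ ε : ℝ, 0 < ε → ∃ δ : ℝ, 0 < δ ∧
    ∀ x : ℕ → X, PseudoOrbit f δ x → ∃ z : X, ∀ i : ℕ, dist (f^[i] z) (x i) < ε

/-- The limit shadowing property. -/
def LimitShadowing (f : X → X) : Prop :=
  ∀ x : ℕ → X, Tendsto (fun i : ℕ => dist (f (x i)) (x (i + 1))) atTop (nhds 0) →
    ∃ z : X, Tendsto (fun i : ℕ => dist (f^[i] z) (x i)) atTop (nhds 0)

/-- Topological transitivity. -/
def TopTransitive {Y : Type*} [TopologicalSpace Y] (f : Y → Y) : Prop :=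
  ∀ U V : Set Y, IsOpen U → IsOpen V → U.Nonempty → V.Nonempty →
    ∃ n : ℕ, 0 < n ∧ (f^[n] '' U ∩ V).Nonempty

/-- Total transitivity. -/
def TotallyTransitive {Y : Type*} [TopologicalSpace Y] (f : Y → Y) : Prop :=
  ∀ n : ℕ, 1 ≤ n → TopTransitive f^[n]

/-- Topological weak mixing: `f × f` is transitive. -/
def WeaklyMixing {Y : Type*} [TopologicalSpace Y] (f : Y → Y) : Prop :=
  TopTransitive (Prod.map f f)

/-- Topological mixing. -/
def TopMixing {Y : Type*} [TopologicalSpace Y] (f : Y → Y) : Prop :=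
  ∀ U V : Set Y, IsOpen U → IsOpen V → U.Nonempty → V.Nonempty →
    ∃ N : ℕ, 0 < N ∧ ∀ n : ℕ, N ≤ n → (f^[n] '' U ∩ V).Nonempty

/-- The forward orbit of a point. -/
def fOrbit (f : X → X) (x : X) : Set X := Set.range fun n : ℕ => f^[n] x

/-- `x` is a minimal point of `f`: every point of the orbit closure of `x`
has orbit dense in that orbit closure. -/
def MinimalPoint (f : X → X) (x : X) : Prop :=
  ∀ y ∈ closure (fOrbit f x), closure (fOrbit f x) ⊆ closure (fOrbit f y)

variable [MeasurableSpace X]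

/-- `μ` is an `f`-invariant Borel probability measure. -/
def InvariantProb (f : X → X) (μ : Measure X) : Prop :=
  IsProbabilityMeasure μ ∧ ∀ B : Set X, MeasurableSet B → μ (f ⁻¹' B) = μ B

/-- A set is universally null if it has measure zero for every invariant
probability measure. -/
def UnivNull (f : X → X) (U : Set X) : Prop :=
  ∀ μ : Measure X, InvariantProb f μ → μ U = 0

/-- The measure center: complement of the union of all universally null open sets. -/
def measureCenter (f : X → X) : Set X :=
  (⋃ U ∈ {U : Set X | IsOpen U ∧ UnivNull f U}, U)ᶜ

/-- `μ` has full support. -/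
def FullSupport (μ : Measure X) : Prop :=
  ∀ U : Set X, IsOpen U → U.Nonempty → 0 < μ U

end Defs

section Visits

variable {X : Type*} [MetricSpace X]

/-- The set of visiting times `N(x,U)`. -/
def visitTimes (f : X → X) (x : X) (U : Set X) : Set ℕ :=
  {n : ℕ | 0 < n ∧ f^[n] x ∈ U}

/-- `η(n,U) = max_{x ∈ X} #(N(x,U) ∩ {0,…,n-1})`. -/
noncomputable def eta (f : X → X) (U : Set X) (n : ℕ) : ℕ :=
  sSup {k : ℕ | ∃ x : X, k = (visitTimes f x U ∩ Set.Iio n).ncard}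

/-- The visit frequency `ξ(U) = inf_{n>0} η(n,U)/n`. -/
noncomputable def xi (f : X → X) (U : Set X) : ℝ :=
  ⨅ n : ℕ, (eta f U (n + 1) : ℝ) / (n + 1)

/-- `J ⊆ ℕ` has asymptotic density `a`. -/
def HasDensity (J : Set ℕ) (a : ℝ) : Prop :=
  Tendsto (fun n : ℕ => ((J ∩ Set.Iio n).ncard : ℝ) / n) atTop (nhds a)

/-- Upper asymptotic density of a set of naturals. -/
noncomputable def upperDensity (J : Set ℕ) : ℝ :=
  limsup (fun n : ℕ => ((J ∩ Set.Iio n).ncard : ℝ) / n) atTop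

end Visits


section AuxA
open Filter Metric Set MeasureTheory Topology BoundedContinuousFunction NNReal ENNReal TopologicalSpace

namespace AvgShadowAux

variable {X : Type*} [MetricSpace X] [CompactSpace X]

lemma coe_le_bnd (φ : X →ᵇ ℝ≥0) (x : X) : (φ x : ℝ) ≤ dist φ 0 := by
  have h := BoundedContinuousFunction.dist_coe_le_dist (f := φ) (g := 0) x
  rw [NNReal.dist_eq] at h
  simpa using (abs_le.mp h).2

lemma Content.apply_eq_coe_toFun {G : Type*} [TopologicalSpace G] (μ : Content G)
    (K : Compacts G) : μ K = (μ.toFun K : ℝ≥0∞) := rfl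

/-- Local Riesz content auxiliary function on bounded continuous functions. -/
noncomputable def rieszContentAux (Λ : (X →ᵇ ℝ≥0) →ₗ[ℝ≥0] ℝ≥0) : Compacts X → ℝ≥0 :=
  fun K => sInf (Λ '' { f : X →ᵇ ℝ≥0 | ∀ x ∈ K, (1 : ℝ≥0) ≤ f x })

lemma rieszContentAux_image_nonempty (Λ : (X →ᵇ ℝ≥0) →ₗ[ℝ≥0] ℝ≥0) (K : Compacts X) :
    (Λ '' { f : X →ᵇ ℝ≥0 | ∀ x ∈ K, (1 : ℝ≥0) ≤ f x }).Nonempty :=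
  ⟨Λ 1, Set.mem_image_of_mem _ fun _ _ => le_of_eq rfl⟩

lemma rieszContentAux_mono (Λ : (X →ᵇ ℝ≥0) →ₗ[ℝ≥0] ℝ≥0) {K₁ K₂ : Compacts X} (h : K₁ ≤ K₂) :
    rieszContentAux Λ K₁ ≤ rieszContentAux Λ K₂ :=
  csInf_le_csInf (OrderBot.bddBelow _) (rieszContentAux_image_nonempty Λ K₂)
    (Set.image_mono (Set.setOf_subset_setOf.mpr fun _ hf x hx => hf x (h hx)))

lemma rieszContentAux_le (Λ : (X →ᵇ ℝ≥0) →ₗ[ℝ≥0] ℝ≥0) {K : Compacts X} {f : X →ᵇ ℝ≥0}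
    (h : ∀ x ∈ K, (1 : ℝ≥0) ≤ f x) : rieszContentAux Λ K ≤ Λ f :=
  csInf_le (OrderBot.bddBelow _) (Set.mem_image_of_mem Λ h)

lemma rieszContentAux_sup_le (Λ : (X →ᵇ ℝ≥0) →ₗ[ℝ≥0] ℝ≥0) (K₁ K₂ : Compacts X) :
    rieszContentAux Λ (K₁ ⊔ K₂) ≤ rieszContentAux Λ K₁ + rieszContentAux Λ K₂ := by
  refine le_of_forall_pos_le_add fun ε εpos => ?_
  obtain ⟨a₁, ⟨f₁, hf₁, rfl⟩, ha₁⟩ := exists_lt_of_csInf_lt (rieszContentAux_image_nonempty Λ K₁)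
    (lt_add_of_pos_right (rieszContentAux Λ K₁) (half_pos εpos))
  obtain ⟨a₂, ⟨f₂, hf₂, rfl⟩, ha₂⟩ := exists_lt_of_csInf_lt (rieszContentAux_image_nonempty Λ K₂)
    (lt_add_of_pos_right (rieszContentAux Λ K₂) (half_pos εpos))
  have hu : ∀ x ∈ K₁ ⊔ K₂, (1 : ℝ≥0) ≤ (f₁ + f₂) x := by
    rintro x (hx | hx)
    · exact le_add_right (hf₁ x hx)
    · exact le_add_left (hf₂ x hx)
  refine (rieszContentAux_le Λ hu).trans ?_
  rw [map_add]
  calc Λ f₁ + Λ f₂ ≤ (rieszContentAux Λ K₁ + ε / 2) + (rieszContentAux Λ K₂ + ε / 2) :=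
        add_le_add ha₁.le ha₂.le
    _ = rieszContentAux Λ K₁ + rieszContentAux Λ K₂ + ε := by
        rw [add_add_add_comm, add_halves]

/-- The Riesz content associated to a linear functional on `X →ᵇ ℝ≥0`, on a compact
metric space. -/
noncomputable def rieszCont (Λ : (X →ᵇ ℝ≥0) →ₗ[ℝ≥0] ℝ≥0) : Content X where
  toFun := rieszContentAux Λ
  mono' := fun _ _ h => rieszContentAux_mono Λ h
  sup_le' := fun K₁ K₂ => rieszContentAux_sup_le Λ K₁ K₂
  sup_disjoint' := by
    intro K₁ K₂ hdis _ _
    refine le_antisymm (rieszContentAux_sup_le Λ K₁ K₂) ?_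
    refine le_csInf (rieszContentAux_image_nonempty Λ _) ?_
    rintro b ⟨g, hg, rfl⟩
    obtain ⟨u, hu0, hu1, hu01⟩ := exists_continuous_zero_one_of_isClosed
      K₁.isCompact.isClosed K₂.isCompact.isClosed hdis
    set v₁ : C(X, ℝ≥0) := ⟨fun x => Real.toNNReal (1 - u x),
      continuous_real_toNNReal.comp (continuous_const.sub u.continuous)⟩ with hv₁
    set v₂ : C(X, ℝ≥0) := ⟨fun x => Real.toNNReal (u x),
      continuous_real_toNNReal.comp u.continuous⟩ with hv₂
    set g₁ : X →ᵇ ℝ≥0 := mkOfCompact (g.toContinuousMap * v₁) with hg₁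
    set g₂ : X →ᵇ ℝ≥0 := mkOfCompact (g.toContinuousMap * v₂) with hg₂
    have hsum : g₁ + g₂ = g := by
      ext x
      have h0 : (0:ℝ) ≤ u x := (hu01 x).1
      have h1 : u x ≤ 1 := (hu01 x).2
      have : v₁ x + v₂ x = 1 := by
        have : ((v₁ x : ℝ≥0) : ℝ) + ((v₂ x : ℝ≥0) : ℝ) = 1 := by
          simp only [hv₁, hv₂, ContinuousMap.coe_mk]
          rw [Real.coe_toNNReal _ (by linarith), Real.coe_toNNReal _ h0]
          ring
        have h2 := congrArg Real.toNNReal this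
        rwa [Real.toNNReal_add (by positivity) (by positivity), Real.toNNReal_coe,
          Real.toNNReal_coe, Real.toNNReal_one] at h2
      have hfinal : g₁ x + g₂ x = g x := by
        show g x * v₁ x + g x * v₂ x = g x
        rw [← mul_add, this, mul_one]
      exact_mod_cast hfinal
    have hK₁ : ∀ x ∈ K₁, (1:ℝ≥0) ≤ g₁ x := by
      intro x hx
      have hu : u x = 0 := hu0 hx
      have : v₁ x = 1 := by
        simp only [hv₁, ContinuousMap.coe_mk, hu, sub_zero, Real.toNNReal_one]
      show (1:ℝ≥0) ≤ g x * v₁ x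
      rw [this, mul_one]
      exact hg x (Or.inl hx)
    have hK₂ : ∀ x ∈ K₂, (1:ℝ≥0) ≤ g₂ x := by
      intro x hx
      have hu : u x = 1 := hu1 hx
      have : v₂ x = 1 := by
        simp only [hv₂, ContinuousMap.coe_mk, hu, Real.toNNReal_one]
      show (1:ℝ≥0) ≤ g x * v₂ x
      rw [this, mul_one]
      exact hg x (Or.inr hx)
    calc rieszContentAux Λ K₁ + rieszContentAux Λ K₂
        ≤ Λ g₁ + Λ g₂ := add_le_add (rieszContentAux_le Λ hK₁) (rieszContentAux_le Λ hK₂)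
      _ = Λ (g₁ + g₂) := (map_add Λ g₁ g₂).symm
      _ = Λ g := by rw [hsum]

variable (Λ : (X →ᵇ ℝ≥0) →ₗ[ℝ≥0] ℝ≥0)

lemma rieszCont_univ (hone : Λ 1 = 1)
    (hmono : ∀ φ ψ : X →ᵇ ℝ≥0, (∀ x, φ x ≤ ψ x) → Λ φ ≤ Λ ψ)
    [MeasurableSpace X] [BorelSpace X] :
    (rieszCont Λ).measure Set.univ = 1 := by
  have huniv : (rieszCont Λ).toFun ⟨Set.univ, isCompact_univ⟩ = 1 := by
    refine le_antisymm ?_ ?_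
    · have : ∀ x ∈ (⟨Set.univ, isCompact_univ⟩ : Compacts X), (1:ℝ≥0) ≤ (1 : X →ᵇ ℝ≥0) x :=
        fun x _ => le_refl _
      have h := rieszContentAux_le Λ this
      rw [hone] at h
      exact h
    · refine le_csInf (rieszContentAux_image_nonempty Λ _) ?_
      rintro b ⟨g, hg, rfl⟩
      have : Λ 1 ≤ Λ g := hmono _ _ fun x => hg x trivial
      rwa [hone] at this
  rw [(rieszCont Λ).measure_apply MeasurableSet.univ,
    (rieszCont Λ).outerMeasure_of_isOpen Set.univ isOpen_univ]
  refine le_antisymm ?_ ?_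
  · refine iSup_le fun K => iSup_le fun _ => ?_
    have := (rieszCont Λ).mono K ⟨Set.univ, isCompact_univ⟩ (subset_univ _)
    calc ((rieszCont Λ) K : ℝ≥0∞) ≤ _ := this
      _ = 1 := by rw [Content.apply_eq_coe_toFun, huniv]; simp
  · have := (rieszCont Λ).le_innerContent ⟨Set.univ, isCompact_univ⟩ ⟨Set.univ, isOpen_univ⟩
      (subset_refl _)
    calc (1:ℝ≥0∞) = ((rieszCont Λ) ⟨Set.univ, isCompact_univ⟩ : ℝ≥0∞) := by
          rw [Content.apply_eq_coe_toFun, huniv]; simp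
      _ ≤ _ := this

lemma rieszCont_lower {K W : Set X} (hK : IsClosed K) (hW : IsOpen W) (hKW : K ⊆ W)
    (c : ℝ≥0) (hc : ∀ g : X →ᵇ ℝ≥0, (∀ x ∈ K, (1:ℝ≥0) ≤ g x) → c ≤ Λ g)
    [MeasurableSpace X] [BorelSpace X] :
    (c : ℝ≥0∞) ≤ (rieszCont Λ).measure W := by
  rw [(rieszCont Λ).measure_apply hW.measurableSet,
    (rieszCont Λ).outerMeasure_of_isOpen W hW]
  have h1 : ((rieszCont Λ) ⟨K, hK.isCompact⟩ : ℝ≥0∞) ≤ (rieszCont Λ).innerContent ⟨W, hW⟩ :=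
    (rieszCont Λ).le_innerContent _ _ hKW
  refine le_trans ?_ h1
  rw [Content.apply_eq_coe_toFun]
  exact ENNReal.coe_le_coe.2 (le_csInf (rieszContentAux_image_nonempty Λ _)
    (by rintro b ⟨g, hg, rfl⟩; exact hc g hg))

lemma rieszCont_invariant (f : X → X) (hf : Continuous f)
    (hinv : ∀ φ : X →ᵇ ℝ≥0, Λ (φ.compContinuous ⟨f, hf⟩) = Λ φ)
    (hone : Λ 1 = 1) (hmono : ∀ φ ψ : X →ᵇ ℝ≥0, (∀ x, φ x ≤ ψ x) → Λ φ ≤ Λ ψ)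
    [MeasurableSpace X] [BorelSpace X] :
    ∀ B : Set X, MeasurableSet B → (rieszCont Λ).measure (f ⁻¹' B) = (rieszCont Λ).measure B := by
  set C := rieszCont Λ with hC
  set μ := C.measure with hμ
  -- preimage of a compact has content at most the content of the compact
  have hcpct : ∀ K : Compacts X, C.toFun ⟨f ⁻¹' K, (K.isCompact.isClosed.preimage hf).isCompact⟩
      ≤ C.toFun K := by
    intro K
    refine le_csInf (rieszContentAux_image_nonempty Λ _) ?_
    rintro b ⟨g, hg, rfl⟩
    have : ∀ x ∈ (⟨f ⁻¹' K, (K.isCompact.isClosed.preimage hf).isCompact⟩ : Compacts X),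
        (1:ℝ≥0) ≤ (g.compContinuous ⟨f, hf⟩) x := fun x hx => hg (f x) hx
    have h2 := rieszContentAux_le Λ this
    rwa [hinv g] at h2
  -- preimage of an open set
  have hopen : ∀ U : Set X, IsOpen U → μ (f ⁻¹' U) ≤ μ U := by
    intro U hU
    rw [hμ, C.measure_apply (hU.preimage hf).measurableSet,
      C.outerMeasure_of_isOpen _ (hU.preimage hf),
      C.measure_apply hU.measurableSet, C.outerMeasure_of_isOpen U hU]
    refine iSup_le fun K => iSup_le fun hKU => ?_
    -- K compact ⊆ f⁻¹ U
    have himg : IsCompact (f '' K) := K.isCompact.image hf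
    have h2 : (K : Set X) ⊆ f ⁻¹' (f '' K) := fun x hx => Set.mem_image_of_mem f hx
    have h3 : (C K : ℝ≥0∞) ≤ C ⟨f '' K, himg⟩ := by
      calc (C K : ℝ≥0∞) ≤ C ⟨f ⁻¹' (f '' K), (himg.isClosed.preimage hf).isCompact⟩ :=
            C.mono _ _ h2
        _ ≤ C ⟨f '' K, himg⟩ := by
            rw [Content.apply_eq_coe_toFun, Content.apply_eq_coe_toFun]
            exact ENNReal.coe_le_coe.2 (hcpct ⟨f '' K, himg⟩)
    refine h3.trans (C.le_innerContent _ _ ?_)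
    exact (Set.image_subset_iff.2 hKU)
  -- preimage of measurable: ≤
  have hle : ∀ B : Set X, MeasurableSet B → μ (f ⁻¹' B) ≤ μ B := by
    intro B hB
    rw [hμ, C.measure_apply hB, C.outerMeasure_eq_iInf]
    refine le_iInf fun U => le_iInf fun hU => le_iInf fun hBU => ?_
    have h4 : μ (f ⁻¹' B) ≤ μ (f ⁻¹' U) :=
      measure_mono (Set.preimage_mono hBU)
    refine h4.trans ((hopen U hU).trans ?_)
    rw [hμ, C.measure_apply hU.measurableSet, C.outerMeasure_of_isOpen U hU]
  -- upgrade to equality using total mass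
  have hmass : μ Set.univ = 1 := rieszCont_univ Λ hone hmono
  intro B hB
  have h1 : μ (f ⁻¹' B) ≤ μ B := hle B hB
  have h2 : μ (f ⁻¹' Bᶜ) ≤ μ Bᶜ := hle Bᶜ hB.compl
  rw [Set.preimage_compl] at h2
  have hBle : μ B ≤ 1 := by rw [← hmass]; exact measure_mono (subset_univ _)
  have hfBle : μ (f ⁻¹' B) ≤ 1 := by rw [← hmass]; exact measure_mono (subset_univ _)
  have hco1 : μ ((f ⁻¹' B)ᶜ) = 1 - μ (f ⁻¹' B) := by
    rw [measure_compl (hB.preimage hf.measurable) (lt_of_le_of_lt hfBle one_lt_top).ne, hmass]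
  have hco2 : μ (Bᶜ) = 1 - μ B := by
    rw [measure_compl hB (lt_of_le_of_lt hBle one_lt_top).ne, hmass]
  rw [hco1, hco2] at h2
  -- from 1 - a ≤ 1 - b (a = μ (f⁻¹B), b = μ B) infer b ≤ a
  have h3 : μ B ≤ μ (f ⁻¹' B) := by
    have h5 := tsub_le_tsub_left h2 (1:ℝ≥0∞)
    rwa [ENNReal.sub_sub_cancel one_ne_top hfBle, ENNReal.sub_sub_cancel one_ne_top hBle] at h5
  exact le_antisymm h1 h3

end AvgShadowAux

end AuxA

section AuxB
open Filter Metric Set MeasureTheory Topology BoundedContinuousFunction NNReal ENNReal TopologicalSpace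

namespace AvgShadowAuxB

variable {X : Type*} [MetricSpace X] [CompactSpace X]

lemma coe_le_bnd (φ : X →ᵇ ℝ≥0) (x : X) : (φ x : ℝ) ≤ dist φ 0 := by
  have h := BoundedContinuousFunction.dist_coe_le_dist (f := φ) (g := 0) x
  rw [NNReal.dist_eq] at h
  simpa using (abs_le.mp h).2

lemma exists_functional (f : X → X) (hf : Continuous f) (w : ℕ → ℕ → X) (n : ℕ → ℕ)
    (hpos : ∀ j, 0 < n j) (hinfty : Tendsto n atTop atTop)
    (hjump : Tendsto (fun j => (∑ i ∈ Finset.range (n j), dist (f (w j i)) (w j (i+1))) / (n j : ℝ))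
      atTop (nhds 0)) :
    ∃ Λ : (X →ᵇ ℝ≥0) →ₗ[ℝ≥0] ℝ≥0,
      (∀ φ ψ : X →ᵇ ℝ≥0, (∀ x, φ x ≤ ψ x) → Λ φ ≤ Λ ψ) ∧ Λ 1 = 1 ∧
      (∀ φ : X →ᵇ ℝ≥0, Λ (φ.compContinuous ⟨f, hf⟩) = Λ φ) ∧
      (∀ (φ : X →ᵇ ℝ≥0) (c : ℝ),
        (∀ᶠ j in atTop, c ≤ (∑ i ∈ Finset.range (n j), ((φ (w j i) : ℝ))) / (n j : ℝ)) →
        c ≤ (Λ φ : ℝ)) := by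
  classical
  set F : Ultrafilter ℕ := Ultrafilter.of atTop with hFdef
  have hFle : (F : Filter ℕ) ≤ atTop := Ultrafilter.of_le _
  set S : (X →ᵇ ℝ≥0) → ℕ → ℝ :=
    fun φ j => (∑ i ∈ Finset.range (n j), ((φ (w j i) : ℝ))) / (n j : ℝ) with hSdef
  have hnpos : ∀ j, (0:ℝ) < n j := fun j => by exact_mod_cast hpos j
  have hS0 : ∀ φ j, 0 ≤ S φ j := fun φ j =>
    div_nonneg (Finset.sum_nonneg fun i _ => (φ _).coe_nonneg) (Nat.cast_nonneg _)
  have hSb : ∀ φ j, S φ j ≤ dist φ 0 := by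
    intro φ j
    rw [hSdef, div_le_iff₀ (hnpos j)]
    calc ∑ i ∈ Finset.range (n j), ((φ (w j i) : ℝ))
        ≤ ∑ _i ∈ Finset.range (n j), dist φ 0 := Finset.sum_le_sum fun i _ => coe_le_bnd φ _
      _ = (n j : ℝ) * dist φ 0 := by
          rw [Finset.sum_const, Finset.card_range, nsmul_eq_mul]
      _ = dist φ 0 * (n j : ℝ) := mul_comm _ _
  have hex : ∀ φ : X →ᵇ ℝ≥0, ∃ a, a ∈ Icc (0:ℝ) (dist φ 0) ∧ Tendsto (S φ) F (nhds a) := by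
    intro φ
    apply isCompact_Icc.ultrafilter_le_nhds (F.map (S φ))
    rw [le_principal_iff]
    exact Ultrafilter.mem_map.2 (by filter_upwards [] using fun j => ⟨hS0 φ j, hSb φ j⟩)
  set Λ₀ : (X →ᵇ ℝ≥0) → ℝ := fun φ => (hex φ).choose with hΛ₀def
  have hT : ∀ φ, Tendsto (S φ) F (nhds (Λ₀ φ)) := fun φ => (hex φ).choose_spec.2
  have hnonneg : ∀ φ, 0 ≤ Λ₀ φ := fun φ => (hex φ).choose_spec.1.1
  have uniq : ∀ {φ : X →ᵇ ℝ≥0} {a : ℝ}, Tendsto (S φ) ↑F (nhds a) → Λ₀ φ = a :=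
    fun {φ a} h => tendsto_nhds_unique (hT φ) h
  have hadd : ∀ φ ψ : X →ᵇ ℝ≥0, Λ₀ (φ + ψ) = Λ₀ φ + Λ₀ ψ := by
    intro φ ψ
    apply uniq
    have hfun : S (φ + ψ) = fun j => S φ j + S ψ j := by
      funext j
      rw [hSdef]
      simp only
      rw [← add_div]
      congr 1
      rw [← Finset.sum_add_distrib]
      refine Finset.sum_congr rfl fun i _ => ?_
      push_cast
      rfl
    rw [hfun]
    exact (hT φ).add (hT ψ)
  have hsmul : ∀ (c : ℝ≥0) (φ : X →ᵇ ℝ≥0), Λ₀ (c • φ) = (c:ℝ) * Λ₀ φ := by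
    intro c φ
    apply uniq
    have hfun : S (c • φ) = fun j => (c:ℝ) * S φ j := by
      funext j
      rw [hSdef]
      simp only
      rw [← mul_div_assoc]
      congr 1
      rw [Finset.mul_sum]
      refine Finset.sum_congr rfl fun i _ => ?_
      push_cast
      rfl
    rw [hfun]
    exact (hT φ).const_mul _
  have hmono₀ : ∀ φ ψ : X →ᵇ ℝ≥0, (∀ x, φ x ≤ ψ x) → Λ₀ φ ≤ Λ₀ ψ := by
    intro φ ψ h
    refine le_of_tendsto_of_tendsto' (hT φ) (hT ψ) fun j => ?_
    rw [hSdef]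
    simp only
    rw [div_le_div_iff_of_pos_right (hnpos j)]
    exact Finset.sum_le_sum fun i _ => by exact_mod_cast h (w j i)
  have hone₀ : Λ₀ 1 = 1 := by
    apply uniq
    have hfun : S 1 = fun _ => (1:ℝ) := by
      funext j
      rw [hSdef]
      simp only
      rw [Finset.sum_congr rfl fun i _ => (by simp : (((1 : X →ᵇ ℝ≥0) (w j i)) : ℝ) = 1),
        Finset.sum_const, Finset.card_range, nsmul_eq_mul, mul_one,
        div_self (hnpos j).ne']
    rw [hfun]
    exact tendsto_const_nhds
  have hlower : ∀ (φ : X →ᵇ ℝ≥0) (c : ℝ),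
      (∀ᶠ j in atTop, c ≤ S φ j) → c ≤ Λ₀ φ :=
    fun φ c h => ge_of_tendsto (hT φ) (h.filter_mono hFle)
  have hinv₀ : ∀ φ : X →ᵇ ℝ≥0, Λ₀ (φ.compContinuous ⟨f, hf⟩) = Λ₀ φ := by
    intro φ
    set φr : X → ℝ := fun x => ((φ x : ℝ)) with hφr
    have hφrc : Continuous φr := NNReal.continuous_coe.comp φ.continuous
    set B : ℝ := dist φ 0 with hB
    have hB0 : 0 ≤ B := dist_nonneg
    have hφrb : ∀ x, |φr x| ≤ B := by
      intro x
      rw [abs_of_nonneg (φ x).coe_nonneg]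
      exact coe_le_bnd φ x
    set D : ℕ → ℝ := fun j => S (φ.compContinuous ⟨f, hf⟩) j - S φ j with hD
    have hDto : Tendsto D atTop (nhds 0) := by
      rw [NormedAddCommGroup.tendsto_nhds_zero]
      intro ε hε
      obtain ⟨η, hη, hηim⟩ := Metric.uniformContinuous_iff.mp
        (CompactSpace.uniformContinuous_of_continuous hφrc) (ε/4) (by positivity)
      set Cc : ℝ := (2*B+1)/η with hCc
      have hCc0 : 0 < Cc := by positivity
      have hptw : ∀ u v : X, |φr u - φr v| ≤ ε/4 + Cc * dist u v := by
        intro u v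
        rcases lt_or_ge (dist u v) η with hlt | hge
        · have := hηim hlt
          rw [Real.dist_eq] at this
          have h2 : (0:ℝ) ≤ Cc * dist u v := by positivity
          linarith
        · have h1 : |φr u - φr v| ≤ 2*B := by
            calc |φr u - φr v| ≤ |φr u| + |φr v| := abs_sub _ _
              _ ≤ B + B := add_le_add (hφrb u) (hφrb v)
              _ = 2*B := by ring
          have h2 : 2*B + 1 ≤ Cc * dist u v := by
            calc 2*B+1 = Cc * η := by rw [hCc]; field_simp
              _ ≤ Cc * dist u v := by
                  exact mul_le_mul_of_nonneg_left hge hCc0.le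
          have h3 : (0:ℝ) ≤ ε/4 := by positivity
          linarith
      -- eventual bounds
      have hJ : ∀ᶠ j in atTop,
          (∑ i ∈ Finset.range (n j), dist (f (w j i)) (w j (i+1))) / (n j : ℝ) < (ε/4)/Cc := by
        have := hjump.eventually (eventually_lt_nhds (show (0:ℝ) < (ε/4)/Cc by positivity))
        exact this
      have hncast : Tendsto (fun j => ((n j : ℝ))) atTop atTop :=
        tendsto_natCast_atTop_atTop.comp hinfty
      have h2B : Tendsto (fun j => (2*B)/((n j:ℝ))) atTop (nhds 0) :=
        Tendsto.div_atTop tendsto_const_nhds hncast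
      have h2Bev : ∀ᶠ j in atTop, (2*B)/((n j:ℝ)) < ε/4 :=
        h2B.eventually (eventually_lt_nhds (by positivity))
      filter_upwards [hJ, h2Bev] with j hJj h2Bj
      -- main estimate
      set a : ℕ → ℝ := fun i => φr (w j i) with ha
      set T1 : ℝ := ∑ i ∈ Finset.range (n j), φr (f (w j i)) with hT1
      set T2 : ℝ := ∑ i ∈ Finset.range (n j), a i with hT2
      set T3 : ℝ := ∑ i ∈ Finset.range (n j), a (i+1) with hT3
      have e1 : ∑ i ∈ Finset.range (n j + 1), a i = T3 + a 0 := Finset.sum_range_succ' a (n j)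
      have e2 : ∑ i ∈ Finset.range (n j + 1), a i = T2 + a (n j) := Finset.sum_range_succ a (n j)
      have h13 : |T1 - T3| ≤ (n j : ℝ) * (ε/4)
          + Cc * (∑ i ∈ Finset.range (n j), dist (f (w j i)) (w j (i+1))) := by
        calc |T1 - T3| = |∑ i ∈ Finset.range (n j), (φr (f (w j i)) - a (i+1))| := by
              rw [hT1, hT3, Finset.sum_sub_distrib]
          _ ≤ ∑ i ∈ Finset.range (n j), |φr (f (w j i)) - a (i+1)| :=
              Finset.abs_sum_le_sum_abs _ _
          _ ≤ ∑ i ∈ Finset.range (n j), (ε/4 + Cc * dist (f (w j i)) (w j (i+1))) :=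
              Finset.sum_le_sum fun i _ => hptw _ _
          _ = (n j : ℝ) * (ε/4)
              + Cc * (∑ i ∈ Finset.range (n j), dist (f (w j i)) (w j (i+1))) := by
              rw [Finset.sum_add_distrib, Finset.sum_const, Finset.card_range, nsmul_eq_mul,
                Finset.mul_sum]
      have h12 : |T1 - T2| ≤ |T1 - T3| + 2*B := by
        have : T1 - T2 = (T1 - T3) - a 0 + a (n j) := by
          have : T2 = T3 + a 0 - a (n j) := by linarith
          rw [this]; ring
        rw [this]
        calc |T1 - T3 - a 0 + a (n j)| ≤ |T1 - T3 - a 0| + |a (n j)| := abs_add_le _ _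
          _ ≤ |T1 - T3| + |a 0| + |a (n j)| := by
              have := abs_sub (T1 - T3) (a 0)
              linarith
          _ ≤ |T1 - T3| + B + B := by
              have := hφrb (w j 0); have := hφrb (w j (n j)); rw [ha]; push_cast; linarith [hφrb (w j 0), hφrb (w j (n j))]
          _ = |T1 - T3| + 2*B := by ring
      have hDj : ‖D j‖ = |T1 - T2| / (n j : ℝ) := by
        rw [hD]
        simp only [Real.norm_eq_abs]
        rw [hSdef]
        simp only
        rw [div_sub_div_same, abs_div, abs_of_pos (hnpos j)]
        congr 2
      rw [hDj]
      have hfinal : |T1 - T2| / (n j:ℝ) ≤ ε/4 + Cc * ((∑ i ∈ Finset.range (n j), dist (f (w j i)) (w j (i+1))) / (n j : ℝ)) + (2*B)/(n j:ℝ) := by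
        have hne : ((n j : ℝ)) ≠ 0 := (hnpos j).ne'
        rw [div_le_iff₀ (hnpos j)]
        have expand : (ε/4 + Cc * ((∑ i ∈ Finset.range (n j), dist (f (w j i)) (w j (i+1))) / (n j : ℝ)) + (2*B)/(n j:ℝ)) * (n j:ℝ)
            = (n j:ℝ) * (ε/4) + Cc * (∑ i ∈ Finset.range (n j), dist (f (w j i)) (w j (i+1))) + 2*B := by
          field_simp
        rw [expand]
        linarith
      have hJ2 : Cc * ((∑ i ∈ Finset.range (n j), dist (f (w j i)) (w j (i+1))) / (n j : ℝ)) < ε/4 := by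
        have := mul_lt_mul_of_pos_left hJj hCc0
        rw [mul_div_assoc'] at this
        calc Cc * ((∑ i ∈ Finset.range (n j), dist (f (w j i)) (w j (i+1))) / (n j : ℝ))
            < Cc * ((ε/4)/Cc) := mul_lt_mul_of_pos_left hJj hCc0
          _ = ε/4 := by
              rw [mul_div_assoc']
              rw [mul_comm]
              rw [mul_div_assoc]
              rw [div_self hCc0.ne', mul_one]
      calc |T1 - T2| / (n j:ℝ) ≤ _ := hfinal
        _ < ε/4 + ε/4 + ε/4 := by linarith
        _ < ε := by linarith
    have hcomp : Tendsto (S (φ.compContinuous ⟨f, hf⟩)) ↑F (nhds (Λ₀ φ + 0)) := by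
      have : S (φ.compContinuous ⟨f, hf⟩) = fun j => S φ j + D j := by
        funext j; rw [hD]; ring
      rw [this]
      exact (hT φ).add (hDto.mono_left hFle)
    have := uniq hcomp
    rwa [add_zero] at this
  refine ⟨{ toFun := fun φ => (Λ₀ φ).toNNReal,
            map_add' := fun φ ψ => by
              show (Λ₀ (φ + ψ)).toNNReal = (Λ₀ φ).toNNReal + (Λ₀ ψ).toNNReal
              rw [hadd]; exact Real.toNNReal_add (hnonneg φ) (hnonneg ψ)
            map_smul' := fun c φ => by
              show (Λ₀ (c • φ)).toNNReal = c • (Λ₀ φ).toNNReal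
              rw [smul_eq_mul, hsmul, Real.toNNReal_mul c.coe_nonneg, Real.toNNReal_coe] },
    ?_, ?_, ?_, ?_⟩
  · exact fun φ ψ h => Real.toNNReal_mono (hmono₀ φ ψ h)
  · show (Λ₀ 1).toNNReal = 1
    rw [hone₀, Real.toNNReal_one]
  · exact fun φ => congrArg Real.toNNReal (hinv₀ φ)
  · intro φ c h
    show c ≤ ((Λ₀ φ).toNNReal : ℝ)
    rw [Real.coe_toNNReal _ (hnonneg φ)]
    exact hlower φ c h

end AvgShadowAuxB

end AuxB
section AuxC

open Filter Metric Set MeasureTheory Topology BoundedContinuousFunction NNReal ENNReal TopologicalSpace AvgShadowAux AvgShadowAuxB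

namespace AvgShadowAux2
open scoped Classical

variable {X : Type*} [MetricSpace X] [CompactSpace X]

lemma key [MeasurableSpace X] [BorelSpace X] (f : X → X) (hf : Continuous f)
    (w : ℕ → ℕ → X) (n : ℕ → ℕ) (hpos : ∀ j, 0 < n j) (hinfty : Tendsto n atTop atTop)
    (hjump : Tendsto (fun j => (∑ i ∈ Finset.range (n j), dist (f (w j i)) (w j (i+1))) / (n j : ℝ))
      atTop (nhds 0)) :
    ∃ μ : Measure X, InvariantProb f μ ∧
      ∀ (K W : Set X), IsClosed K → IsOpen W → K ⊆ W → ∀ γ : ℝ,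
        (∀ᶠ j in atTop,
          γ * n j ≤ (((Finset.range (n j)).filter (fun i => w j i ∈ K)).card : ℝ)) →
        ENNReal.ofReal γ ≤ μ W := by
  obtain ⟨Λ, hmono, hone, hinv, hlow⟩ := exists_functional f hf w n hpos hinfty hjump
  have hnpos : ∀ j, (0:ℝ) < n j := fun j => by exact_mod_cast hpos j
  refine ⟨(rieszCont Λ).measure, ⟨⟨rieszCont_univ Λ hone hmono⟩,
    rieszCont_invariant Λ f hf hinv hone hmono⟩, ?_⟩
  intro K W hK hW hKW γ hfreq
  rcases le_or_gt γ 0 with hγ | hγ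
  · rw [ENNReal.ofReal_eq_zero.2 hγ]; exact zero_le
  obtain ⟨u, hu0, hu1, hu01⟩ := exists_continuous_zero_one_of_isClosed hW.isClosed_compl hK
    (Set.disjoint_left.mpr fun {x} hx hxK => hx (hKW hxK))
  set φ₀ : X →ᵇ ℝ≥0 := mkOfCompact ⟨fun x => Real.toNNReal (u x),
    continuous_real_toNNReal.comp u.continuous⟩ with hφ₀def
  have hφ₀K : ∀ x ∈ K, φ₀ x = 1 := by
    intro x hx
    show Real.toNNReal (u x) = 1
    rw [hu1 hx]; simp
  have hφ₀W : ∀ x ∉ W, φ₀ x = 0 := by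
    intro x hx
    show Real.toNNReal (u x) = 0
    have : x ∈ Wᶜ := hx
    rw [hu0 this]; simp
  have hφ₀1 : ∀ x, φ₀ x ≤ 1 := by
    intro x
    show Real.toNNReal (u x) ≤ 1
    rw [show (1:ℝ≥0) = Real.toNNReal 1 by simp]
    exact Real.toNNReal_mono (hu01 x).2
  have hev : ∀ᶠ j in atTop,
      γ ≤ (∑ i ∈ Finset.range (n j), ((φ₀ (w j i) : ℝ))) / (n j : ℝ) := by
    filter_upwards [hfreq] with j hj
    rw [le_div_iff₀ (hnpos j)]
    rw [mul_comm]
    calc (n j : ℝ) * γ = γ * n j := mul_comm _ _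
      _ ≤ (((Finset.range (n j)).filter (fun i => w j i ∈ K)).card : ℝ) := hj
      _ = ∑ _i ∈ (Finset.range (n j)).filter (fun i => w j i ∈ K), (1:ℝ) := by
          rw [Finset.sum_const, nsmul_eq_mul, mul_one]
      _ ≤ ∑ i ∈ (Finset.range (n j)).filter (fun i => w j i ∈ K), ((φ₀ (w j i) : ℝ)) := by
          refine Finset.sum_le_sum fun i hi => ?_
          rw [hφ₀K _ (Finset.mem_filter.mp hi).2]
          norm_num
      _ ≤ ∑ i ∈ Finset.range (n j), ((φ₀ (w j i) : ℝ)) :=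
          Finset.sum_le_sum_of_subset_of_nonneg (Finset.filter_subset _ _)
            (fun i _ _ => (φ₀ (w j i)).coe_nonneg)
  have hγΛ : γ ≤ ((Λ φ₀ : ℝ≥0) : ℝ) := hlow φ₀ γ hev
  refine ENNReal.le_of_forall_pos_le_add fun ε hε _ => ?_
  set α : ℝ := (min γ (ε:ℝ)) / 2 with hα
  have hεR : (0:ℝ) < ε := hε
  have hα0 : 0 < α := div_pos (lt_min hγ hεR) two_pos
  have hαγ : α ≤ γ / 2 := by
    rw [hα]
    have : min γ (ε:ℝ) ≤ γ := min_le_left _ _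
    linarith
  have hαε : α ≤ (ε:ℝ) := by
    rw [hα]
    have : min γ (ε:ℝ) ≤ ε := min_le_right _ _
    linarith
  set α' : ℝ≥0 := Real.toNNReal α with hα'
  have hα'pos : 0 < α' := Real.toNNReal_pos.2 hα0
  set Kα : Set X := {z | α' ≤ φ₀ z} with hKα
  have hKαc : IsClosed Kα := isClosed_le continuous_const φ₀.continuous
  have hKαW : Kα ⊆ W := by
    intro z hz
    by_contra hzW
    have h0 : φ₀ z = 0 := hφ₀W z hzW
    have : α' ≤ 0 := h0 ▸ hz
    exact absurd this (not_le.2 hα'pos)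
  have hc : ∀ g : X →ᵇ ℝ≥0, (∀ z ∈ Kα, (1:ℝ≥0) ≤ g z) → Real.toNNReal (γ - α) ≤ Λ g := by
    intro g hg
    have hpt : ∀ z, φ₀ z ≤ (α' • (1 : X →ᵇ ℝ≥0) + g) z := by
      intro z
      have hval : (α' • (1 : X →ᵇ ℝ≥0) + g) z = α' + g z := by
        show α' • (1 : X →ᵇ ℝ≥0) z + g z = α' + g z
        norm_num
      rw [hval]
      rcases le_or_gt α' (φ₀ z) with hz | hz
      · calc φ₀ z ≤ 1 := hφ₀1 z
          _ ≤ g z := hg z hz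
          _ ≤ α' + g z := le_add_self
      · exact hz.le.trans le_self_add
    have h1 : Λ φ₀ ≤ Λ (α' • 1 + g) := hmono _ _ hpt
    rw [map_add, LinearMap.map_smul, smul_eq_mul, hone, mul_one] at h1
    have h2 : ((Λ φ₀ : ℝ≥0) : ℝ) ≤ α + ((Λ g : ℝ≥0) : ℝ) := by
      have h3 := (NNReal.coe_le_coe.2 h1)
      rwa [NNReal.coe_add, Real.coe_toNNReal _ hα0.le] at h3
    rw [Real.toNNReal_le_iff_le_coe]
    linarith
  have hlower := rieszCont_lower Λ hKαc hW hKαW _ hc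
  calc ENNReal.ofReal γ = ENNReal.ofReal ((γ - α) + α) := by ring_nf
    _ = ENNReal.ofReal (γ - α) + ENNReal.ofReal α :=
        ENNReal.ofReal_add (by linarith) hα0.le
    _ ≤ (rieszCont Λ).measure W + ENNReal.ofReal α := add_le_add_left hlower _
    _ ≤ (rieszCont Λ).measure W + ε := by
        refine add_le_add_right ?_ _
        calc ENNReal.ofReal α ≤ ENNReal.ofReal (ε:ℝ) := ENNReal.ofReal_le_ofReal hαε
          _ = (ε : ℝ≥0∞) := ENNReal.ofReal_coe_nnreal

lemma null_of_closed_subset [MeasurableSpace X] [BorelSpace X] (f : X → X)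
    {μ : Measure X} (hμ : InvariantProb f μ) {K : Set X} (hKc : IsClosed K)
    (hK : K ⊆ (measureCenter f)ᶜ) : μ K = 0 := by
  set S := {U : Set X | IsOpen U ∧ UnivNull f U} with hS
  have hcover : K ⊆ ⋃ (U : S), (U : Set X) := by
    intro z hz
    have h1 : z ∈ ⋃ U ∈ {U : Set X | IsOpen U ∧ UnivNull f U}, U := by
      have h2 := hK hz
      rw [measureCenter, compl_compl] at h2
      exact h2
    rw [Set.mem_iUnion₂] at h1
    obtain ⟨U, hUS, hzU⟩ := h1
    exact Set.mem_iUnion.2 ⟨⟨U, hUS⟩, hzU⟩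
  obtain ⟨t, ht⟩ := hKc.isCompact.elim_finite_subcover (fun U : S => (U : Set X))
    (fun U => U.2.1) hcover
  have h0 : μ K = 0 := by
    refine le_antisymm ?_ zero_le
    calc μ K ≤ μ (⋃ U ∈ t, (U : Set X)) := measure_mono ht
      _ ≤ ∑ U ∈ t, μ (U : Set X) := measure_biUnion_finset_le _ _
      _ = 0 := Finset.sum_eq_zero fun U _ => U.2.2 μ hμ
  exact h0

lemma escape [MeasurableSpace X] [BorelSpace X] (f : X → X) (hf : Continuous f)
    (A : Set X) (hmc : measureCenter f ⊆ A)
    (η γ : ℝ) (hη : 0 < η) (hγ : 0 < γ) :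
    ∃ δ : ℝ, 0 < δ ∧ ∀ x : ℕ → X, AvgPseudoOrbit f δ x →
      ∃ N₁ : ℕ, ∀ k n : ℕ, N₁ ≤ n →
        ((((Finset.range n).filter (fun i => η ≤ infDist (x (k+i)) A)).card : ℝ) < γ * n) := by
  by_contra hcon
  push_neg at hcon
  have hcon' : ∀ j : ℕ, ∃ x : ℕ → X, AvgPseudoOrbit f (1/(j+1:ℝ)) x ∧
      ∀ N₁ : ℕ, ∃ k n : ℕ, N₁ ≤ n ∧
        γ * n ≤ (((Finset.range n).filter (fun i => η ≤ infDist (x (k+i)) A)).card : ℝ) :=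
    fun j => hcon (1/(j+1:ℝ)) (by positivity)
  choose x hpo hbad using hcon'
  have hNex : ∀ j : ℕ, ∃ N : ℕ, 0 < N ∧ ∀ n : ℕ, N ≤ n → ∀ k : ℕ,
      (∑ i ∈ Finset.range n, dist (f (x j (i + k))) (x j (i + k + 1))) / n < 1/(j+1:ℝ) :=
    fun j => hpo j
  choose N hN0 hNP using hNex
  have hknex : ∀ j : ℕ, ∃ k n : ℕ, max (j+1) (N j) ≤ n ∧
      γ * n ≤ (((Finset.range n).filter (fun i => η ≤ infDist (x j (k+i)) A)).card : ℝ) :=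
    fun j => hbad j (max (j+1) (N j))
  choose kk nn hnn hfr using hknex
  set w : ℕ → ℕ → X := fun j i => x j (kk j + i) with hw
  have hnpos : ∀ j, 0 < nn j := fun j =>
    lt_of_lt_of_le (Nat.succ_pos j) (le_trans (le_max_left _ _) (hnn j))
  have hnposR : ∀ j, (0:ℝ) < nn j := fun j => by exact_mod_cast hnpos j
  have hinfty : Tendsto nn atTop atTop := by
    refine tendsto_atTop_mono (fun j => ?_) tendsto_id
    calc (id j : ℕ) = j := rfl
      _ ≤ j + 1 := Nat.le_succ j
      _ ≤ nn j := le_trans (le_max_left _ _) (hnn j)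
  have hjump : Tendsto
      (fun j => (∑ i ∈ Finset.range (nn j), dist (f (w j i)) (w j (i+1))) / (nn j : ℝ))
      atTop (nhds 0) := by
    have hub : ∀ j, (∑ i ∈ Finset.range (nn j), dist (f (w j i)) (w j (i+1))) / (nn j : ℝ)
        ≤ 1/(j+1:ℝ) := by
      intro j
      have heq : ∑ i ∈ Finset.range (nn j), dist (f (w j i)) (w j (i+1))
          = ∑ i ∈ Finset.range (nn j), dist (f (x j (i + kk j))) (x j (i + kk j + 1)) := by
        refine Finset.sum_congr rfl fun i _ => ?_
        have e1 : kk j + i = i + kk j := Nat.add_comm _ _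
        have e2 : kk j + (i+1) = i + kk j + 1 := by omega
        rw [hw]
        simp only
        rw [e1, e2]
      rw [heq]
      exact le_of_lt (hNP j (nn j) (le_trans (le_max_right _ _) (hnn j)) (kk j))
    have hlb : ∀ j, (0:ℝ) ≤
        (∑ i ∈ Finset.range (nn j), dist (f (w j i)) (w j (i+1))) / (nn j : ℝ) :=
      fun j => div_nonneg (Finset.sum_nonneg fun i _ => dist_nonneg) (Nat.cast_nonneg _)
    exact tendsto_of_tendsto_of_tendsto_of_le_of_le tendsto_const_nhds
      tendsto_one_div_add_atTop_nhds_zero_nat hlb hub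
  obtain ⟨μ, hμ, hlower⟩ := key f hf w nn hnpos hinfty hjump
  set K : Set X := {z | η ≤ infDist z A} with hK
  set W : Set X := {z | η/2 < infDist z A} with hW
  set K₂ : Set X := {z | η/2 ≤ infDist z A} with hK₂
  have hKc : IsClosed K := isClosed_le continuous_const (continuous_infDist_pt A)
  have hWo : IsOpen W := isOpen_lt continuous_const (continuous_infDist_pt A)
  have hKW : K ⊆ W := by
    intro z hz
    have hz' : η ≤ infDist z A := hz
    show η/2 < infDist z A
    linarith
  have hWK₂ : W ⊆ K₂ := by
    intro z hz
    have hz' : η/2 < infDist z A := hz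
    show η/2 ≤ infDist z A
    linarith
  have hK₂c : IsClosed K₂ := isClosed_le continuous_const (continuous_infDist_pt A)
  have hfreq : ∀ᶠ j in atTop,
      γ * nn j ≤ (((Finset.range (nn j)).filter (fun i => w j i ∈ K)).card : ℝ) := by
    filter_upwards [] with j
    exact hfr j
  have hlow := hlower K W hKc hWo hKW γ hfreq
  have hK₂null : μ K₂ = 0 := by
    refine null_of_closed_subset f hμ hK₂c ?_
    intro z hz hzmc
    have hzA : z ∈ A := hmc hzmc
    have : infDist z A = 0 := infDist_zero_of_mem hzA
    rw [hK₂, Set.mem_setOf_eq, this] at hz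
    linarith
  have hWnull : μ W = 0 := le_antisymm (le_trans (measure_mono hWK₂) hK₂null.le) zero_le
  rw [hWnull] at hlow
  rw [nonpos_iff_eq_zero, ENNReal.ofReal_eq_zero] at hlow
  linarith

end AvgShadowAux2

end AuxC
section AuxD

open Filter Metric Set MeasureTheory Topology

lemma AvgShadowAux2.avgPseudoOrbit_mono {X : Type*} [MetricSpace X] {f : X → X} {δ δ' : ℝ}
    (h : δ ≤ δ') {x : ℕ → X} (hx : AvgPseudoOrbit f δ x) : AvgPseudoOrbit f δ' x := by
  obtain ⟨N, hN, hP⟩ := hx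
  exact ⟨N, hN, fun n hn k => lt_of_lt_of_le (hP n hn k) h⟩

lemma AvgShadowAux2.restrict_iterate {X : Type*} [MetricSpace X] (f : X → X) {A : Set X}
    (hfA : Set.MapsTo f A A) (i : ℕ) (z : A) :
    (((Set.MapsTo.restrict f A A hfA)^[i]) z : X) = f^[i] (z : X) := by
  induction i with
  | zero => rfl
  | succ i ih =>
      rw [Function.iterate_succ_apply', Function.iterate_succ_apply',
        Set.MapsTo.val_restrict_apply, ih]

end AuxD

/-- If a closed invariant set `A` contains the measure center and
`f|_A` has the average shadowing property, then so does `f`. -/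
theorem avgShadowing_of_restriction_to_measureCenter
    {X : Type*} [MetricSpace X] [CompactSpace X] [MeasurableSpace X] [BorelSpace X]
    (f : X → X) (hf : Continuous f)
    (A : Set X) (hA : IsClosed A) (hfA : Set.MapsTo f A A)
    (hmc : measureCenter f ⊆ A)
    (h : AvgShadowing (Set.MapsTo.restrict f A A hfA)) : AvgShadowing f := by
  classical
  intro ε hε
  rcases isEmpty_or_nonempty X with hemp | hne
  · exact ⟨1, one_pos, fun x _ => (IsEmpty.false (x 0)).elim⟩
  obtain ⟨x₀⟩ := hne
  have hAne : A.Nonempty := by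
    by_contra hA0
    rw [Set.not_nonempty_iff_eq_empty] at hA0
    have hjump0 : Tendsto (fun j : ℕ =>
        (∑ i ∈ Finset.range (j+1), dist (f (f^[i] x₀)) (f^[i+1] x₀)) / ((j+1 : ℕ) : ℝ))
        atTop (nhds 0) := by
      have hzero : ∀ j : ℕ,
          (∑ i ∈ Finset.range (j+1), dist (f (f^[i] x₀)) (f^[i+1] x₀)) = 0 := by
        intro j
        refine Finset.sum_eq_zero fun i _ => ?_
        rw [Function.iterate_succ_apply' f i x₀]
        exact dist_self _
      simp only [hzero, zero_div]
      exact tendsto_const_nhds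
    obtain ⟨μ, hμ, _⟩ := AvgShadowAux2.key f hf (fun _ i => f^[i] x₀) (fun j => j+1)
      (fun j => Nat.succ_pos j)
      (tendsto_atTop_mono (fun j => Nat.le_succ j) tendsto_id) hjump0
    have hsub : (Set.univ : Set X) ⊆ (measureCenter f)ᶜ := by
      intro z _ hz
      have hzA := hmc hz
      rw [hA0] at hzA
      exact hzA
    have h0 := AvgShadowAux2.null_of_closed_subset f hμ isClosed_univ hsub
    have h1 : μ Set.univ = 1 := hμ.1.measure_univ
    rw [h0] at h1
    exact zero_ne_one h1
  obtain ⟨D₀, hD₀⟩ := Metric.isBounded_iff.mp (isCompact_univ (X := X)).isBounded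
  set D : ℝ := max D₀ 0 with hD
  have hDist : ∀ a b : X, dist a b ≤ D :=
    fun a b => le_trans (hD₀ (Set.mem_univ a) (Set.mem_univ b)) (le_max_left _ _)
  have hD0 : (0:ℝ) ≤ D := le_max_right _ _
  have hinfD : ∀ z : X, infDist z A ≤ D := by
    intro z
    obtain ⟨a, ha⟩ := hAne
    exact le_trans (infDist_le_dist_of_mem ha) (hDist _ _)
  obtain ⟨δA, hδA, hshad⟩ := h (ε/2) (by positivity)
  obtain ⟨η', hη', hη'im⟩ := Metric.uniformContinuous_iff.mp
    (CompactSpace.uniformContinuous_of_continuous hf) (δA/8) (by positivity)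
  set η : ℝ := min η' (min (δA/8) (ε/8)) with hηdef
  have hη0 : 0 < η := lt_min hη' (lt_min (by positivity) (by positivity))
  have hηη' : η ≤ η' := min_le_left _ _
  have hηδA : η ≤ δA/8 := le_trans (min_le_right _ _) (min_le_left _ _)
  have hηε : η ≤ ε/8 := le_trans (min_le_right _ _) (min_le_right _ _)
  set γ : ℝ := min (δA/(8*(D+1))) (ε/(8*(D+1))) with hγdef
  have hγ0 : 0 < γ := lt_min (by positivity) (by positivity)
  have hDγ : ∀ c : ℝ, 0 < c → γ ≤ c/(8*(D+1)) → D * γ ≤ c/8 := by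
    intro c hc hγc
    have h2 : D * γ ≤ (D+1) * (c/(8*(D+1))) := by
      refine mul_le_mul (by linarith) hγc hγ0.le (by linarith)
    have h3 : (D+1) * (c/(8*(D+1))) = c/8 := by
      field_simp
    linarith
  have hDγδA : D * γ ≤ δA/8 := hDγ δA hδA (min_le_left _ _)
  have hDγε : D * γ ≤ ε/8 := hDγ ε hε (min_le_right _ _)
  obtain ⟨δ₁, hδ₁, hesc⟩ := AvgShadowAux2.escape f hf A hmc η γ hη0 hγ0
  refine ⟨min δ₁ (δA/8), by positivity, ?_⟩
  intro x hx
  have hxδ₁ := AvgShadowAux2.avgPseudoOrbit_mono (min_le_left _ _) hx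
  have hxδA8 := AvgShadowAux2.avgPseudoOrbit_mono (min_le_right _ _) hx
  obtain ⟨N₁, hN₁⟩ := hesc x hxδ₁
  obtain ⟨N, hNpos, hNP⟩ := hxδA8
  have hproj : ∀ z : X, ∃ yz : X, yz ∈ A ∧ infDist z A = dist z yz := by
    intro z
    obtain ⟨yz, hy1, hy2⟩ := hA.isCompact.exists_infDist_eq_dist hAne z
    exact ⟨yz, hy1, hy2⟩
  choose p hpA hpd using hproj
  set y : ℕ → A := fun i => ⟨p (x i), hpA _⟩ with hy
  have hterm1 : ∀ m : ℕ, dist (f (p (x m))) (f (x m))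
      ≤ δA/8 + (if η ≤ infDist (x m) A then D else 0) := by
    intro m
    by_cases hfar : η ≤ infDist (x m) A
    · rw [if_pos hfar]
      have := hDist (f (p (x m))) (f (x m))
      linarith
    · rw [if_neg hfar]
      push_neg at hfar
      have hd : dist (p (x m)) (x m) < η' := by
        rw [dist_comm, ← hpd (x m)]
        exact lt_of_lt_of_le hfar hηη'
      have h5 := hη'im hd
      linarith
  have hterm3 : ∀ m : ℕ, dist (x m) (p (x m))
      ≤ η + (if η ≤ infDist (x m) A then D else 0) := by
    intro m
    rw [← hpd (x m)]
    by_cases hfar : η ≤ infDist (x m) A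
    · rw [if_pos hfar]
      have := hinfD (x m)
      linarith
    · rw [if_neg hfar]
      push_neg at hfar
      linarith
  have hcard' : ∀ s n : ℕ, N₁ ≤ n →
      ∑ i ∈ Finset.range n, (if η ≤ infDist (x (i+s)) A then D else 0) ≤ D * (γ * n) := by
    intro s n hn
    have he : ∑ i ∈ Finset.range n, (if η ≤ infDist (x (i+s)) A then D else 0)
        = ∑ i ∈ Finset.range n, (if η ≤ infDist (x (s+i)) A then D else 0) :=
      Finset.sum_congr rfl fun i _ => by rw [Nat.add_comm i s]
    rw [he, Finset.sum_ite, Finset.sum_const, Finset.sum_const, nsmul_eq_mul, nsmul_eq_mul,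
      mul_zero, add_zero]
    calc ((Finset.filter (fun i => η ≤ infDist (x (s+i)) A) (Finset.range n)).card : ℝ) * D
        ≤ (γ * n) * D := mul_le_mul_of_nonneg_right (hN₁ s n hn).le hD0
      _ = D * (γ * n) := mul_comm _ _
  have hypo : AvgPseudoOrbit (Set.MapsTo.restrict f A A hfA) δA y := by
    refine ⟨max N₁ (max N 1),
      lt_of_lt_of_le Nat.zero_lt_one (le_trans (le_max_right N 1) (le_max_right N₁ _)), ?_⟩
    intro n hn k
    have hnN₁ : N₁ ≤ n := le_trans (le_max_left _ _) hn
    have hnN : N ≤ n := le_trans (le_trans (le_max_left _ _) (le_max_right _ _)) hn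
    have hn1 : 1 ≤ n := le_trans (le_trans (le_max_right _ _) (le_max_right _ _)) hn
    have hnR : (0:ℝ) < n := by exact_mod_cast hn1
    rw [div_lt_iff₀ hnR]
    have hterm : ∀ i : ℕ, dist ((Set.MapsTo.restrict f A A hfA) (y (i+k))) (y (i+k+1))
        ≤ (δA/8 + (if η ≤ infDist (x (i+k)) A then D else 0))
          + dist (f (x (i+k))) (x (i+k+1))
          + (η + (if η ≤ infDist (x (i+k+1)) A then D else 0)) := by
      intro i
      have hv : dist ((Set.MapsTo.restrict f A A hfA) (y (i+k))) (y (i+k+1))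
          = dist (f (p (x (i+k)))) (p (x (i+k+1))) := by
        rw [Subtype.dist_eq, Set.MapsTo.val_restrict_apply]
      rw [hv]
      have t2 := dist_triangle (f (p (x (i+k)))) (f (x (i+k))) (p (x (i+k+1)))
      have t3 := dist_triangle (f (x (i+k))) (x (i+k+1)) (p (x (i+k+1)))
      linarith [hterm1 (i+k), hterm3 (i+k+1), t2, t3]
    have hs1 := hcard' k n hnN₁
    have hs2 : ∑ i ∈ Finset.range n, (if η ≤ infDist (x (i+k+1)) A then D else 0)
        ≤ D * (γ * n) := by
      have he2 : ∑ i ∈ Finset.range n, (if η ≤ infDist (x (i+k+1)) A then D else 0)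
          = ∑ i ∈ Finset.range n, (if η ≤ infDist (x (i+(k+1))) A then D else 0) :=
        Finset.sum_congr rfl fun i _ => by rw [Nat.add_assoc]
      rw [he2]
      exact hcard' (k+1) n hnN₁
    have hs3 : ∑ i ∈ Finset.range n, dist (f (x (i+k))) (x (i+k+1)) < (δA/8)*n := by
      have h6 := hNP n hnN k
      rwa [div_lt_iff₀ hnR] at h6
    have hDγn : D*(γ*n) ≤ (δA/8)*n := by
      calc D*(γ*(n:ℝ)) = (D*γ)*n := by ring
        _ ≤ (δA/8)*n := mul_le_mul_of_nonneg_right hDγδA hnR.le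
    have hηn : η*(n:ℝ) ≤ (δA/8)*n := mul_le_mul_of_nonneg_right hηδA hnR.le
    have hfin : (δA/8)*(n:ℝ) + (δA/8)*n + (δA/8)*n + (δA/8)*n + (δA/8)*n < δA * n := by
      nlinarith [mul_pos hδA hnR]
    calc ∑ i ∈ Finset.range n, dist ((Set.MapsTo.restrict f A A hfA) (y (i+k))) (y (i+k+1))
        ≤ ∑ i ∈ Finset.range n, ((δA/8 + (if η ≤ infDist (x (i+k)) A then D else 0))
            + dist (f (x (i+k))) (x (i+k+1))
            + (η + (if η ≤ infDist (x (i+k+1)) A then D else 0))) :=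
          Finset.sum_le_sum fun i _ => hterm i
      _ = ((δA/8)*n + ∑ i ∈ Finset.range n, (if η ≤ infDist (x (i+k)) A then D else 0))
          + (∑ i ∈ Finset.range n, dist (f (x (i+k))) (x (i+k+1)))
          + (η*n + ∑ i ∈ Finset.range n, (if η ≤ infDist (x (i+k+1)) A then D else 0)) := by
          simp only [Finset.sum_add_distrib, Finset.sum_const, Finset.card_range, nsmul_eq_mul]
          ring
      _ < δA * n := by linarith
  obtain ⟨z, hz⟩ := hshad y hypo
  refine ⟨(z : X), ?_⟩
  have hz' : limsup (fun n : ℕ =>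
      (∑ i ∈ Finset.range n, dist ((Set.MapsTo.restrict f A A hfA)^[i] z) (y i)) / n)
      atTop < ε/2 := hz
  have hs_b : ∀ n : ℕ,
      (∑ i ∈ Finset.range n, dist ((Set.MapsTo.restrict f A A hfA)^[i] z) (y i)) / n ≤ D := by
    intro n
    rcases Nat.eq_zero_or_pos n with h0 | hpos'
    · subst h0; simp [hD0]
    · have hnR : (0:ℝ) < n := by exact_mod_cast hpos'
      rw [div_le_iff₀ hnR]
      calc ∑ i ∈ Finset.range n, dist ((Set.MapsTo.restrict f A A hfA)^[i] z) (y i)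
          ≤ ∑ _i ∈ Finset.range n, D := Finset.sum_le_sum fun i _ => by
            rw [Subtype.dist_eq]; exact hDist _ _
        _ = (n:ℝ) * D := by rw [Finset.sum_const, Finset.card_range, nsmul_eq_mul]
        _ = D * n := mul_comm _ _
  have hev1 : ∀ᶠ n in atTop,
      (∑ i ∈ Finset.range n, dist ((Set.MapsTo.restrict f A A hfA)^[i] z) (y i)) / n < ε/2 :=
    eventually_lt_of_limsup_lt hz' (isBoundedUnder_of ⟨D, hs_b⟩)
  have hev2 : ∀ᶠ n in atTop,
      (∑ i ∈ Finset.range n, infDist (x i) A) / n ≤ η + D*γ := by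
    filter_upwards [eventually_ge_atTop (max N₁ 1)] with n hn
    have hnN₁ : N₁ ≤ n := le_trans (le_max_left _ _) hn
    have hn1 : 1 ≤ n := le_trans (le_max_right _ _) hn
    have hnR : (0:ℝ) < n := by exact_mod_cast hn1
    rw [div_le_iff₀ hnR]
    have hc0 : ∑ i ∈ Finset.range n, (if η ≤ infDist (x i) A then D else 0) ≤ D * (γ * n) := by
      have := hcard' 0 n hnN₁
      simpa only [Nat.add_zero] using this
    have hDγn : D*(γ*(n:ℝ)) ≤ (D*γ)*n := by ring_nf; exact le_refl _
    calc ∑ i ∈ Finset.range n, infDist (x i) A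
        ≤ ∑ i ∈ Finset.range n, (η + (if η ≤ infDist (x i) A then D else 0)) := by
          refine Finset.sum_le_sum fun i _ => ?_
          by_cases hfar : η ≤ infDist (x i) A
          · rw [if_pos hfar]
            have := hinfD (x i)
            linarith
          · rw [if_neg hfar]
            push_neg at hfar
            linarith
      _ = η*n + ∑ i ∈ Finset.range n, (if η ≤ infDist (x i) A then D else 0) := by
          simp only [Finset.sum_add_distrib, Finset.sum_const, Finset.card_range, nsmul_eq_mul]
          ring
      _ ≤ η*n + (D*γ)*n := by
          have h9 : D*(γ*(n:ℝ)) = (D*γ)*n := by ring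
          rw [← h9]
          linarith
      _ = (η + D*γ)*n := by ring
  have hptle : ∀ n : ℕ, (∑ i ∈ Finset.range n, dist (f^[i] (z:X)) (x i)) / n
      ≤ (∑ i ∈ Finset.range n, dist ((Set.MapsTo.restrict f A A hfA)^[i] z) (y i)) / n
        + (∑ i ∈ Finset.range n, infDist (x i) A) / n := by
    intro n
    rcases Nat.eq_zero_or_pos n with h0 | hpos'
    · subst h0; simp
    · have hnR : (0:ℝ) < n := by exact_mod_cast hpos'
      rw [← add_div, div_le_div_iff_of_pos_right hnR, ← Finset.sum_add_distrib]
      refine Finset.sum_le_sum fun i _ => ?_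
      have h7 := dist_triangle (f^[i] (z:X)) (p (x i)) (x i)
      have h8 : dist ((Set.MapsTo.restrict f A A hfA)^[i] z) (y i)
          = dist (f^[i] (z:X)) (p (x i)) := by
        rw [Subtype.dist_eq, AvgShadowAux2.restrict_iterate]
      have h9 : dist (p (x i)) (x i) = infDist (x i) A := by
        rw [hpd (x i)]
        exact dist_comm _ _
      linarith [h7, h8, h9]
  have hev3 : ∀ᶠ n in atTop,
      (∑ i ∈ Finset.range n, dist (f^[i] (z:X)) (x i)) / n ≤ ε/2 + (η + D*γ) := by
    filter_upwards [hev1, hev2] with n h1 h2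
    have := hptle n
    linarith
  have hbound : limsup (fun n : ℕ =>
      (∑ i ∈ Finset.range n, dist (f^[i] (z:X)) (x i)) / n) atTop ≤ ε/2 + (η + D*γ) := by
    refine limsup_le_of_le ?_ hev3
    have hub : ∀ n : ℕ, (∑ i ∈ Finset.range n, dist (f^[i] (z:X)) (x i)) / n ≤ D := by
      intro n
      rcases Nat.eq_zero_or_pos n with h0 | hpos'
      · subst h0; simp [hD0]
      · have hnR : (0:ℝ) < n := by exact_mod_cast hpos'
        rw [div_le_iff₀ hnR]
        calc ∑ i ∈ Finset.range n, dist (f^[i] (z:X)) (x i)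
            ≤ ∑ _i ∈ Finset.range n, D := Finset.sum_le_sum fun i _ => hDist _ _
          _ = (n:ℝ) * D := by rw [Finset.sum_const, Finset.card_range, nsmul_eq_mul]
          _ = D * n := mul_comm _ _
    exact isCoboundedUnder_le_of_le atTop
      fun n => div_nonneg (Finset.sum_nonneg fun i _ => dist_nonneg) (Nat.cast_nonneg _)
  show limsup (fun n : ℕ =>
      (∑ i ∈ Finset.range n, dist (f^[i] (z:X)) (x i)) / n) atTop < ε
  calc limsup (fun n : ℕ =>
      (∑ i ∈ Finset.range n, dist (f^[i] (z:X)) (x i)) / n) atTop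
      ≤ ε/2 + (η + D*γ) := hbound
    _ < ε := by linarith
end

section
/- Let (X,f) be a dynamical system with X a compact metric space and f : X → X continuous. If f is chain transitive and has the limit shadowing property, then f has the shadowing property. -/
open Filter Metric Set MeasureTheory Topology

lemma exists_bad_finite_aux {X : Type*} [MetricSpace X] [CompactSpace X]
    (f : X → X) (hf : Continuous f) (ε : ℝ) (hε : 0 < ε) (x : ℕ → X)
    (hbad : ∀ z : X, ∃ i : ℕ, ε ≤ dist (f^[i] z) (x i)) :
    ∃ n : ℕ, ∀ z : X, ∃ i ≤ n, ε / 2 < dist (f^[i] z) (x i) := by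
  by_contra h
  push_neg at h
  set K : ℕ → Set X := fun n => {z | ∀ i ≤ n, dist (f^[i] z) (x i) ≤ ε / 2} with hK
  have hcl : ∀ n, IsClosed (K n) := by
    intro n
    have : K n = ⋂ i, ⋂ _ : i ≤ n, {z | dist (f^[i] z) (x i) ≤ ε / 2} := by
      ext z; simp [hK]
    rw [this]
    exact isClosed_iInter fun i => isClosed_iInter fun _ =>
      isClosed_le (Continuous.dist (hf.iterate i) continuous_const) continuous_const
  have hne : ∀ n, (K n).Nonempty := by
    intro n
    obtain ⟨z, hz⟩ := h n
    exact ⟨z, fun i hi => hz i hi⟩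
  have hdec : ∀ n, K (n + 1) ⊆ K n := by
    intro n z hz i hi
    exact hz i (hi.trans (Nat.le_succ n))
  obtain ⟨z, hz⟩ := IsCompact.nonempty_iInter_of_sequence_nonempty_isCompact_isClosed
    K hdec hne ((hcl 0).isCompact) hcl
  obtain ⟨i, hi⟩ := hbad z
  have hzi : dist (f^[i] z) (x i) ≤ ε / 2 := by
    have := Set.mem_iInter.1 hz i
    exact this i le_rfl
  linarith

/-- A chain transitive compact system with limit shadowing has
shadowing. -/
theorem shadowing_of_chainTransitive_limitShadowing
    {X : Type*} [MetricSpace X] [CompactSpace X]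
    (f : X → X) (hf : Continuous f)
    (hct : ChainTransitive f) (hls : LimitShadowing f) : Shadowing f := by
  intro ε hε
  by_contra h
  push_neg at h
  -- for each k, a `1/(k+1)`-pseudo-orbit with a finite bad segment
  have hstep : ∀ k : ℕ, ∃ (x : ℕ → X) (n : ℕ),
      PseudoOrbit f (1 / ((k : ℝ) + 1)) x ∧
      ∀ z : X, ∃ i ≤ n, ε / 2 < dist (f^[i] z) (x i) := by
    intro k
    have hδ : (0 : ℝ) < 1 / ((k : ℝ) + 1) := by positivity
    obtain ⟨x, hx, hbad⟩ := h (1 / ((k : ℝ) + 1)) hδ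
    obtain ⟨n, hn⟩ := exists_bad_finite_aux f hf ε hε x hbad
    exact ⟨x, n, hx, hn⟩
  choose xs ns hpo hbadfin using hstep
  -- connecting chains
  have hchainex : ∀ k : ℕ, ∃ m : ℕ, 0 < m ∧
      FinChain f (1 / ((k : ℝ) + 1)) m (xs k (ns k)) (xs (k + 1) 0) := by
    intro k
    have hδ : (0 : ℝ) < 1 / ((k : ℝ) + 1) := by positivity
    exact hct (1 / ((k : ℝ) + 1)) hδ (xs k (ns k)) (xs (k + 1) 0)
  choose ms hms hchain using hchainex
  choose ds hd0 hdm hdstep using hchain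
  -- block lengths and cumulative starts
  set L : ℕ → ℕ := fun k => ns k + ms k with hL
  set S : ℕ → ℕ := fun k => ∑ j ∈ Finset.range k, L j with hSdef
  have hS0 : S 0 = 0 := by simp [hSdef]
  have hSsucc : ∀ k, S (k + 1) = S k + L k := fun k => Finset.sum_range_succ L k
  have hLpos : ∀ k, 0 < L k := fun k => Nat.lt_of_lt_of_le (hms k) (Nat.le_add_left _ _)
  have hSmono : StrictMono S := strictMono_nat_of_lt_succ fun k => by
    rw [hSsucc]; exact Nat.lt_add_of_pos_right (hLpos k)
  have hSk : ∀ k, k ≤ S k := fun k => hSmono.le_apply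
  -- the block function
  have hLd : ∀ k, L k = ns k + ms k := fun _ => rfl
  set B : ℕ → ℕ → X := fun k j => if j ≤ ns k then xs k j else ds k (j - ns k) with hB
  set Kf : ℕ → ℕ := fun i => Nat.findGreatest (fun k => S k ≤ i) i with hKf
  set y : ℕ → X := fun i => B (Kf i) (i - S (Kf i)) with hy
  have hK1 : ∀ i, S (Kf i) ≤ i := by
    intro i
    exact Nat.findGreatest_spec (P := fun k => S k ≤ i) (Nat.zero_le i) (show S 0 ≤ i by omega)
  have hK2 : ∀ i, i < S (Kf i + 1) := by
    intro i
    by_contra hcon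
    push_neg at hcon
    have h1 : Kf i + 1 ≤ i := le_trans (hSk _) hcon
    exact (Nat.findGreatest_is_greatest (Nat.lt_succ_self _) h1) hcon
  have hKeq : ∀ k i, S k ≤ i → i < S (k + 1) → Kf i = k := by
    intro k i h1 h2
    refine le_antisymm ?_ (Nat.le_findGreatest (le_trans (hSk k) h1) h1)
    by_contra hcon
    push_neg at hcon
    have : S (k + 1) ≤ S (Kf i) := hSmono.monotone (by omega)
    exact absurd (le_trans this (hK1 i)) (not_le.2 h2)
  have hyB : ∀ k i, S k ≤ i → i < S (k + 1) → y i = B k (i - S k) := by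
    intro k i h1 h2
    simp only [hy, hKeq k i h1 h2]
  -- boundary compatibility
  have hBL : ∀ k, B k (L k) = B (k + 1) 0 := by
    intro k
    have h1 : ¬ L k ≤ ns k := by
      have := hLd k; have := hms k; omega
    have h2 : B k (L k) = ds k (ms k) := by
      simp only [hB, if_neg h1]
      congr 1
      have := hLd k; omega
    rw [h2, hdm k]
    simp [hB]
  -- pseudo-orbit estimate within a block
  have hBstep : ∀ k j, j < L k →
      dist (f (B k j)) (B k (j + 1)) < 1 / ((k : ℝ) + 1) := by
    intro k j hj
    by_cases hcase : j + 1 ≤ ns k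
    · have h1 : j ≤ ns k := le_trans (Nat.le_succ j) hcase
      simp only [hB, if_pos h1, if_pos hcase]
      exact hpo k j
    · have h2 : ns k ≤ j := by omega
      have hBkj : B k j = ds k (j - ns k) := by
        by_cases hj' : j ≤ ns k
        · have hje : j = ns k := le_antisymm hj' h2
          subst hje
          simp [hB, hd0 k]
        · simp only [hB, if_neg hj']
      have hBkj1 : B k (j + 1) = ds k (j - ns k + 1) := by
        have : j + 1 - ns k = j - ns k + 1 := by omega
        simp only [hB, if_neg hcase, this]
      rw [hBkj, hBkj1]
      exact hdstep k (j - ns k) (by have := hLd k; omega)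
  -- pseudo-orbit estimate for y
  have hystep : ∀ i, dist (f (y i)) (y (i + 1)) < 1 / ((Kf i : ℝ) + 1) := by
    intro i
    set k := Kf i with hk
    have h1 : S k ≤ i := hK1 i
    have h2 : i < S (k + 1) := hK2 i
    have hyi : y i = B k (i - S k) := hyB k i h1 h2
    have hsub : i + 1 - S k = (i - S k) + 1 := by omega
    have hyi1 : y (i + 1) = B k (i - S k + 1) := by
      by_cases hlt : i + 1 < S (k + 1)
      · rw [hyB k (i + 1) (by omega) hlt, hsub]
      · have heq : i + 1 = S (k + 1) := by omega
        have h4 : i + 1 < S (k + 1 + 1) := by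
          have e1 := hSsucc (k + 1)
          have e2 := hLpos (k + 1)
          omega
        rw [hyB (k + 1) (i + 1) heq.ge h4]
        have h5 : i + 1 - S (k + 1) = 0 := by omega
        rw [h5, ← hBL k]
        congr 1
        have := hSsucc k
        omega
    rw [hyi, hyi1]
    exact hBstep k (i - S k) (by have := hSsucc k; omega)
  -- y is an asymptotic pseudo-orbit
  have hasymp : Tendsto (fun i : ℕ => dist (f (y i)) (y (i + 1))) atTop (nhds 0) := by
    rw [Metric.tendsto_atTop]
    intro ε' hε'
    obtain ⟨k, hk⟩ := exists_nat_one_div_lt hε'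
    refine ⟨S k, fun i hi => ?_⟩
    have hkK : k ≤ Kf i := Nat.le_findGreatest (le_trans (hSk k) hi) hi
    have hle : 1 / ((Kf i : ℝ) + 1) ≤ 1 / ((k : ℝ) + 1) := by
      apply one_div_le_one_div_of_le (by positivity)
      exact_mod_cast Nat.succ_le_succ hkK
    have hd := hystep i
    rw [Real.dist_eq, sub_zero, abs_of_nonneg dist_nonneg]
    linarith
  -- limit shadowing gives z
  obtain ⟨z, hz⟩ := hls y hasymp
  rw [Metric.tendsto_atTop] at hz
  obtain ⟨N, hN⟩ := hz (ε / 2) (by linarith)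
  -- contradiction with badness of segment N
  obtain ⟨i, hi, hbig⟩ := hbadfin N (f^[S N] z)
  have hiter : f^[i] (f^[S N] z) = f^[S N + i] z := by
    rw [add_comm, Function.iterate_add_apply]
  have hyval : y (S N + i) = xs N i := by
    have h1 : S N ≤ S N + i := Nat.le_add_right _ _
    have h2 : S N + i < S (N + 1) := by
      rw [hSsucc]
      have : i < L N := by have := hLd N; have := hms N; omega
      omega
    rw [hyB N (S N + i) h1 h2]
    simp only [Nat.add_sub_cancel_left, hB, if_pos hi]
  have hNle : N ≤ S N + i := le_trans (hSk N) (Nat.le_add_right _ _)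
  have hsmall := hN (S N + i) hNle
  rw [Real.dist_eq, sub_zero, abs_of_nonneg dist_nonneg] at hsmall
  rw [hiter] at hbig
  rw [hyval] at hsmall
  linarith
end

section
/- Let (X,f) be a dynamical system with X a compact metric space and f : X → X continuous, and let A ⊆ X be a set containing the measure center of f. Then for every ε > 0 there exists N ∈ ℕ such that for every x ∈ X and every n ≥ N, (1/n)·#{0 ≤ i < n : dist(f^i(x), A) < ε} > 1 − ε. -/
open Filter Metric Set MeasureTheory Topology

section KB

open BoundedContinuousFunction TopologicalSpace
open scoped ENNReal NNReal

/-- Key lemma (Krylov–Bogolyubov style): if a compact set `K` inside a universally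
null open set `U` were visited with frequency `≥ ε` along arbitrarily long orbit
segments, we could build an invariant probability measure giving `U` positive
measure, a contradiction. -/
theorem key_no_invariant {X : Type*} [MetricSpace X] [CompactSpace X]
    [MeasurableSpace X] [BorelSpace X]
    (f : X → X) (hf : Continuous f) (K U : Set X) (hK : IsCompact K)
    (hU : IsOpen U) (hKU : K ⊆ U) (hnull : UnivNull f U) (ε : ℝ) (hε : 0 < ε)
    (H : ∀ N : ℕ, ∃ x : X, ∃ n : ℕ, N ≤ n ∧
      ε * n ≤ (({i : ℕ | i < n ∧ f^[i] x ∈ K}).ncard : ℝ)) :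
    False := by
  classical
  have hncard : ∀ (y : X) (m : ℕ), ({i : ℕ | i < m ∧ f^[i] y ∈ K}).ncard
      = ((Finset.range m).filter (fun i => f^[i] y ∈ K)).card := by
    intro y m
    rw [← Set.ncard_coe_finset]
    congr 1
    ext i
    simp [Finset.mem_filter, Finset.mem_range]
  obtain ⟨𝒰, h𝒰⟩ := Filter.exists_ultrafilter_le (atTop : Filter ℕ)
  choose x n hn hcard using fun k => H (k + 1)
  have hnpos : ∀ k, 0 < (n k : ℝ) := fun k => by
    exact_mod_cast Nat.lt_of_lt_of_le (Nat.succ_pos k) (hn k)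
  set Av : (X →ᵇ ℝ) → ℕ → ℝ :=
    fun g k => (∑ i ∈ Finset.range (n k), g (f^[i] (x k))) / (n k) with hAv
  -- existence of ultrafilter limits of averages
  have hconv : ∀ g : X →ᵇ ℝ, ∃ L, Tendsto (Av g) 𝒰 (nhds L) := by
    intro g
    have hmem : ∀ k, Av g k ∈ Set.Icc (-‖g‖) ‖g‖ := by
      intro k
      rw [Set.mem_Icc, ← abs_le]
      have h1 : |∑ i ∈ Finset.range (n k), g (f^[i] (x k))| ≤ (n k) * ‖g‖ := by
        calc |∑ i ∈ Finset.range (n k), g (f^[i] (x k))|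
            ≤ ∑ i ∈ Finset.range (n k), |g (f^[i] (x k))| := Finset.abs_sum_le_sum_abs _ _
          _ ≤ ∑ i ∈ Finset.range (n k), ‖g‖ :=
              Finset.sum_le_sum fun i _ => g.norm_coe_le_norm _
          _ = (n k) * ‖g‖ := by simp [mul_comm]
      have : |Av g k| = |∑ i ∈ Finset.range (n k), g (f^[i] (x k))| / (n k) := by
        rw [hAv]; simp only []
        rw [abs_div, abs_of_pos (hnpos k)]
      rw [this, div_le_iff₀ (hnpos k)]
      linarith [h1]
    obtain ⟨L, -, hL⟩ := isCompact_Icc.ultrafilter_le_nhds (𝒰.map (Av g))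
      (by
        refine le_principal_iff.mpr ?_
        exact Filter.mem_map.mpr (Filter.univ_mem' hmem))
    exact ⟨L, hL⟩
  choose Lam hLam using hconv
  have hzero : Lam 0 = 0 := by
    refine tendsto_nhds_unique (hLam 0) ?_
    have : Av 0 = fun _ => (0:ℝ) := by
      funext k; simp [hAv]
    rw [this]; exact tendsto_const_nhds
  have hone : Lam 1 = 1 := by
    refine tendsto_nhds_unique (hLam 1) ?_
    have : Av 1 = fun _ => (1:ℝ) := by
      funext k; simp [hAv, div_self (hnpos k).ne']
    rw [this]; exact tendsto_const_nhds
  have hadd : ∀ g h : X →ᵇ ℝ, Lam (g + h) = Lam g + Lam h := by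
    intro g h
    refine tendsto_nhds_unique (hLam (g + h)) ?_
    have : Av (g + h) = fun k => Av g k + Av h k := by
      funext k; simp [hAv, Finset.sum_add_distrib, add_div]
    rw [this]; exact (hLam g).add (hLam h)
  have hmono : ∀ g h : X →ᵇ ℝ, (∀ y, g y ≤ h y) → Lam g ≤ Lam h := by
    intro g h hgh
    refine le_of_tendsto_of_tendsto' (hLam g) (hLam h) fun k => ?_
    exact (div_le_div_iff_of_pos_right (hnpos k)).mpr (Finset.sum_le_sum fun i _ => hgh _)
  have hnonneg : ∀ g : X →ᵇ ℝ, (∀ y, 0 ≤ g y) → 0 ≤ Lam g := by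
    intro g hg
    have := hmono 0 g (by simpa using hg)
    rwa [hzero] at this
  -- shift invariance of the limit functional
  have hcomp : ∀ g : X →ᵇ ℝ, Lam (g.compContinuous ⟨f, hf⟩) = Lam g := by
    intro g
    have hshift : Av (g.compContinuous ⟨f, hf⟩)
        = fun k => Av g k + (g (f^[n k] (x k)) - g (x k)) / (n k) := by
      funext k
      have h1 : ∀ i, (g.compContinuous ⟨f, hf⟩) (f^[i] (x k)) = g (f^[i + 1] (x k)) := by
        intro i
        rw [compContinuous_apply]
        exact congrArg g (Function.iterate_succ_apply' f i (x k)).symm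
      have h2 : ∑ i ∈ Finset.range (n k), g (f^[i + 1] (x k))
          = ∑ i ∈ Finset.range (n k), g (f^[i] (x k)) + g (f^[n k] (x k)) - g (x k) := by
        have e1 := Finset.sum_range_succ' (fun i => g (f^[i] (x k))) (n k)
        have e2 := Finset.sum_range_succ (fun i => g (f^[i] (x k))) (n k)
        simp only [Function.iterate_zero_apply] at e1
        linarith [e1, e2]
      rw [hAv]
      simp only []
      rw [Finset.sum_congr rfl (fun i _ => h1 i), h2]
      ring
    have hd : Tendsto (fun k => (g (f^[n k] (x k)) - g (x k)) / (n k)) 𝒰 (nhds 0) := by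
      have hb : ∀ k, ‖(g (f^[n k] (x k)) - g (x k)) / (n k)‖ ≤ (2 * ‖g‖) / (k + 1) := by
        intro k
        rw [Real.norm_eq_abs, abs_div, abs_of_pos (hnpos k)]
        have h1 : |g (f^[n k] (x k)) - g (x k)| ≤ 2 * ‖g‖ := by
          have := g.norm_coe_le_norm (f^[n k] (x k))
          have := g.norm_coe_le_norm (x k)
          calc |g (f^[n k] (x k)) - g (x k)| ≤ |g (f^[n k] (x k))| + |g (x k)| := abs_sub _ _
            _ ≤ 2 * ‖g‖ := by
                simp only [Real.norm_eq_abs] at *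
                linarith
        have h2 : (k + 1 : ℝ) ≤ (n k : ℝ) := by exact_mod_cast hn k
        have h3 : (0:ℝ) < k + 1 := by positivity
        rw [div_le_div_iff₀ (hnpos k) h3]
        nlinarith [abs_nonneg (g (f^[n k] (x k)) - g (x k))]
      refine squeeze_zero_norm hb ?_
      have : Tendsto (fun k : ℕ => (2 * ‖g‖) / (k + 1)) atTop (nhds 0) := by
        have := (tendsto_const_div_atTop_nhds_zero_nat (2 * ‖g‖)).comp
          (tendsto_add_atTop_nat 1)
        have heq : ((fun m : ℕ => 2 * ‖g‖ / (m:ℝ)) ∘ fun a => a + 1)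
            = fun k : ℕ => 2 * ‖g‖ / ((k:ℝ) + 1) := by
          funext k; simp [Function.comp]
        rwa [heq] at this
      exact this.mono_left h𝒰
    refine tendsto_nhds_unique (hLam _) ?_
    rw [hshift]
    simpa using (hLam g).add hd
  -- the family of test functions above a set, and the content value
  set TT : Set X → Set ℝ := fun K' =>
    {r | ∃ g : X →ᵇ ℝ, (∀ y, 0 ≤ g y) ∧ (∀ y ∈ K', 1 ≤ g y) ∧ Lam g = r} with hTT
  have hTmem : ∀ (K' : Set X) (g : X →ᵇ ℝ), (∀ y, 0 ≤ g y) → (∀ y ∈ K', 1 ≤ g y) →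
      Lam g ∈ TT K' := fun K' g h1 h2 => ⟨g, h1, h2, rfl⟩
  have hTne : ∀ K' : Set X, (TT K').Nonempty := by
    intro K'
    exact ⟨Lam 1, hTmem K' 1 (fun y => by simp) (fun y _ => by simp)⟩
  have hTlb : ∀ (K' : Set X), ∀ r ∈ TT K', 0 ≤ r := by
    rintro K' r ⟨g, hg0, -, rfl⟩
    exact hnonneg g hg0
  have hTbdd : ∀ K' : Set X, BddBelow (TT K') := fun K' => ⟨0, fun r hr => hTlb K' r hr⟩
  have hc_nonneg : ∀ K' : Set X, 0 ≤ sInf (TT K') := fun K' =>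
    le_csInf (hTne K') (hTlb K')
  have hc_mono : ∀ K₁ K₂ : Set X, K₁ ⊆ K₂ → sInf (TT K₁) ≤ sInf (TT K₂) := by
    intro K₁ K₂ hsub
    refine csInf_le_csInf (hTbdd _) (hTne _) ?_
    rintro r ⟨g, hg0, hg1, rfl⟩
    exact ⟨g, hg0, fun y hy => hg1 y (hsub hy), rfl⟩
  -- subadditivity
  have hsub_add : ∀ K₁ K₂ : Set X,
      sInf (TT (K₁ ∪ K₂)) ≤ sInf (TT K₁) + sInf (TT K₂) := by
    intro K₁ K₂
    have hkey : ∀ r ∈ TT K₁, ∀ s ∈ TT K₂, sInf (TT (K₁ ∪ K₂)) ≤ r + s := by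
      rintro r ⟨g, hg0, hg1, rfl⟩ s ⟨h, hh0, hh1, rfl⟩
      rw [← hadd]
      refine csInf_le (hTbdd _) (hTmem _ (g + h)
        (fun y => by simpa using add_nonneg (hg0 y) (hh0 y)) ?_)
      intro y hy
      rcases hy with hy | hy
      · have := hg1 y hy
        have := hh0 y
        simp only [BoundedContinuousFunction.coe_add, Pi.add_apply]
        linarith
      · have := hh1 y hy
        have := hg0 y
        simp only [BoundedContinuousFunction.coe_add, Pi.add_apply]
        linarith
    have h1 : sInf (TT (K₁ ∪ K₂)) - sInf (TT K₂) ≤ sInf (TT K₁) := by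
      refine le_csInf (hTne _) fun r hr => ?_
      have h2 : sInf (TT (K₁ ∪ K₂)) - r ≤ sInf (TT K₂) := by
        refine le_csInf (hTne _) fun s hs => ?_
        linarith [hkey r hr s hs]
      linarith
    linarith
  -- superadditivity on disjoint closed sets (via Urysohn)
  have hsuper : ∀ K₁ K₂ : Set X, IsClosed K₁ → IsClosed K₂ → Disjoint K₁ K₂ →
      sInf (TT K₁) + sInf (TT K₂) ≤ sInf (TT (K₁ ∪ K₂)) := by
    intro K₁ K₂ hc₁ hc₂ hdisj
    obtain ⟨φ, hφ0, hφ1, hφ01⟩ := exists_continuous_zero_one_of_isClosed hc₁ hc₂ hdisj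
    refine le_csInf (hTne _) ?_
    rintro r ⟨g, hg0, hg1, rfl⟩
    set Φ : X →ᵇ ℝ := mkOfCompact φ with hΦ
    have hΦval : ∀ y, Φ y = φ y := fun y => rfl
    have key : Lam (g * (1 - Φ)) + Lam (g * Φ) = Lam g := by
      rw [← hadd]
      congr 1
      ring
    have m1 : sInf (TT K₁) ≤ Lam (g * (1 - Φ)) := by
      refine csInf_le (hTbdd _) (hTmem _ _ ?_ ?_)
      · intro y
        have := (hφ01 y).2
        have := hg0 y
        simp only [BoundedContinuousFunction.coe_mul, BoundedContinuousFunction.coe_sub,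
          BoundedContinuousFunction.coe_one, Pi.mul_apply, Pi.sub_apply, Pi.one_apply, hΦval]
        nlinarith
      · intro y hy
        have h0 : φ y = 0 := hφ0 hy
        have := hg1 y (Or.inl hy)
        simp only [BoundedContinuousFunction.coe_mul, BoundedContinuousFunction.coe_sub,
          BoundedContinuousFunction.coe_one, Pi.mul_apply, Pi.sub_apply, Pi.one_apply, hΦval, h0]
        simpa using this
    have m2 : sInf (TT K₂) ≤ Lam (g * Φ) := by
      refine csInf_le (hTbdd _) (hTmem _ _ ?_ ?_)
      · intro y
        have := (hφ01 y).1
        have := hg0 y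
        simp only [BoundedContinuousFunction.coe_mul, Pi.mul_apply, hΦval]
        nlinarith
      · intro y hy
        have h1 : φ y = 1 := hφ1 hy
        have := hg1 y (Or.inr hy)
        simp only [BoundedContinuousFunction.coe_mul, Pi.mul_apply, hΦval, h1]
        simpa using this
    linarith
  -- the content
  set C : MeasureTheory.Content X :=
    { toFun := fun K' => Real.toNNReal (sInf (TT ↑K'))
      mono' := fun K₁ K₂ h => Real.toNNReal_le_toNNReal (hc_mono _ _ h)
      sup_disjoint' := by
        intro K₁ K₂ hdisj hcl₁ hcl₂
        have hle := hsub_add (↑K₁) (↑K₂)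
        have hge := hsuper (↑K₁) (↑K₂) hcl₁ hcl₂ hdisj
        have heq : sInf (TT (↑K₁ ∪ ↑K₂)) = sInf (TT ↑K₁) + sInf (TT ↑K₂) :=
          le_antisymm hle hge
        simp only [Compacts.coe_sup]
        rw [heq, Real.toNNReal_add (hc_nonneg _) (hc_nonneg _)]
      sup_le' := by
        intro K₁ K₂
        have hle := hsub_add (↑K₁) (↑K₂)
        simp only [Compacts.coe_sup]
        calc Real.toNNReal (sInf (TT (↑K₁ ∪ ↑K₂)))
            ≤ Real.toNNReal (sInf (TT ↑K₁) + sInf (TT ↑K₂)) :=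
              Real.toNNReal_le_toNNReal hle
          _ = Real.toNNReal (sInf (TT ↑K₁)) + Real.toNNReal (sInf (TT ↑K₂)) :=
              Real.toNNReal_add (hc_nonneg _) (hc_nonneg _)
          _ ≤ _ := le_rfl } with hC
  have hCval : ∀ K' : Compacts X,
      (C K' : ℝ≥0∞) = ((Real.toNNReal (sInf (TT ↑K')) : ℝ≥0) : ℝ≥0∞) := fun _ => rfl
  set μ : Measure X := C.measure with hμ
  have hμ_open : ∀ (V : Set X) (hV : IsOpen V),
      μ V = C.innerContent ⟨V, hV⟩ := by
    intro V hV
    rw [hμ, MeasureTheory.Content.measure_apply _ hV.measurableSet,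
      C.outerMeasure_of_isOpen V hV]
  -- total mass one
  have hc_univ_le : sInf (TT (Set.univ : Set X)) ≤ 1 := by
    have := csInf_le (hTbdd _) (hTmem (Set.univ : Set X) 1
      (fun y => by simp) (fun y _ => by simp))
    rwa [hone] at this
  have hc_univ_ge : (1:ℝ) ≤ sInf (TT (Set.univ : Set X)) := by
    refine le_csInf (hTne _) ?_
    rintro r ⟨g, hg0, hg1, rfl⟩
    have := hmono 1 g (fun y => by simpa using hg1 y trivial)
    rwa [hone] at this
  have hprob : μ Set.univ = 1 := by
    rw [hμ_open Set.univ isOpen_univ]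
    apply le_antisymm
    · have h1 : C.innerContent ⟨Set.univ, isOpen_univ⟩ ≤ C ⟨Set.univ, isCompact_univ⟩ :=
        C.innerContent_le _ _ (by simp)
      refine h1.trans ?_
      rw [hCval]
      have : Real.toNNReal (sInf (TT (Set.univ : Set X))) ≤ 1 := by
        rw [show (1 : ℝ≥0) = Real.toNNReal 1 by simp]
        exact Real.toNNReal_le_toNNReal hc_univ_le
      exact_mod_cast this
    · have h1 : (C ⟨Set.univ, isCompact_univ⟩ : ℝ≥0∞)
          ≤ C.innerContent ⟨Set.univ, isOpen_univ⟩ :=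
        C.le_innerContent _ _ (by simp)
      refine le_trans ?_ h1
      rw [hCval]
      have : (1:ℝ≥0) ≤ Real.toNNReal (sInf (TT (Set.univ : Set X))) := by
        rw [show (1 : ℝ≥0) = Real.toNNReal 1 by simp]
        exact Real.toNNReal_le_toNNReal hc_univ_ge
      exact_mod_cast this
  have hPμ : IsProbabilityMeasure μ := ⟨hprob⟩
  -- invariance
  have hinner_mono_f : ∀ (V : Set X) (hV : IsOpen V),
      C.innerContent ⟨f ⁻¹' V, hV.preimage hf⟩ ≤ C.innerContent ⟨V, hV⟩ := by
    intro V hV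
    rw [MeasureTheory.Content.innerContent]
    refine iSup₂_le fun K' hK' => ?_
    have himg : (f '' ↑K') ⊆ V := by rwa [Set.image_subset_iff]
    have hstep : (C K' : ℝ≥0∞) ≤ C ⟨f '' ↑K', K'.2.image hf⟩ := by
      rw [hCval, hCval]
      have hle : sInf (TT ↑K') ≤ sInf (TT (f '' ↑K')) := by
        refine le_csInf (hTne _) ?_
        rintro r ⟨g, hg0, hg1, rfl⟩
        have hmem := csInf_le (hTbdd _) (hTmem (↑K' : Set X) (g.compContinuous ⟨f, hf⟩)
          (fun y => hg0 _) (fun y hy => by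
            rw [compContinuous_apply]
            exact hg1 _ ⟨y, hy, rfl⟩))
        rwa [hcomp g] at hmem
      exact_mod_cast Real.toNNReal_le_toNNReal hle
    exact hstep.trans (C.le_innerContent _ _ himg)
  have hout_mono : ∀ s : Set X, C.outerMeasure (f ⁻¹' s) ≤ C.outerMeasure s := by
    intro s
    rw [C.outerMeasure_eq_iInf, C.outerMeasure_eq_iInf]
    refine le_iInf fun V => le_iInf fun hV => le_iInf fun hsV => ?_
    refine iInf_le_of_le (f ⁻¹' V) (iInf_le_of_le (hV.preimage hf)
      (iInf_le_of_le (Set.preimage_mono hsV) ?_))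
    exact hinner_mono_f V hV
  have hinv : ∀ B : Set X, MeasurableSet B → μ (f ⁻¹' B) = μ B := by
    intro B hB
    have hBf : MeasurableSet (f ⁻¹' B) := hf.measurable hB
    have h1 : μ (f ⁻¹' B) ≤ μ B := by
      rw [hμ, MeasureTheory.Content.measure_apply _ hBf,
        MeasureTheory.Content.measure_apply _ hB]
      exact hout_mono B
    have h2 : μ (f ⁻¹' Bᶜ) ≤ μ Bᶜ := by
      rw [hμ, MeasureTheory.Content.measure_apply _ (hf.measurable hB.compl),
        MeasureTheory.Content.measure_apply _ hB.compl]
      exact hout_mono Bᶜ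
    have t1 : μ (f ⁻¹' B) + μ (f ⁻¹' Bᶜ) = 1 := by
      rw [Set.preimage_compl, measure_add_measure_compl hBf, hprob]
    have t2 : μ B + μ Bᶜ = 1 := by
      rw [measure_add_measure_compl hB, hprob]
    have hfin : μ Bᶜ ≠ ⊤ := measure_ne_top μ _
    have h3 : μ B + μ Bᶜ ≤ μ (f ⁻¹' B) + μ Bᶜ := by
      rw [t2, ← t1]
      exact add_le_add le_rfl h2
    have h4 : μ B ≤ μ (f ⁻¹' B) :=
      (ENNReal.add_le_add_iff_right hfin).mp h3
    exact le_antisymm h1 h4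
  have hinvμ : InvariantProb f μ := ⟨hPμ, hinv⟩
  have h0 : μ U = 0 := hnull μ hinvμ
  -- positive measure of U : contradiction
  have hεle : ε ≤ sInf (TT K) := by
    refine le_csInf (hTne _) ?_
    rintro r ⟨g, hg0, hg1, rfl⟩
    refine ge_of_tendsto' (hLam g) fun k => ?_
    rw [hAv]
    simp only []
    rw [le_div_iff₀ (hnpos k)]
    have hstep : (((Finset.range (n k)).filter (fun i => f^[i] (x k) ∈ K)).card : ℝ)
        ≤ ∑ i ∈ Finset.range (n k), g (f^[i] (x k)) := by
      calc (((Finset.range (n k)).filter (fun i => f^[i] (x k) ∈ K)).card : ℝ)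
          ≤ ∑ i ∈ (Finset.range (n k)).filter (fun i => f^[i] (x k) ∈ K),
              g (f^[i] (x k)) := by
            have := Finset.card_nsmul_le_sum
              ((Finset.range (n k)).filter (fun i => f^[i] (x k) ∈ K))
              (fun i => g (f^[i] (x k))) 1
              (fun i hi => hg1 _ (Finset.mem_filter.mp hi).2)
            simpa using this
        _ ≤ ∑ i ∈ Finset.range (n k), g (f^[i] (x k)) :=
            Finset.sum_le_sum_of_subset_of_nonneg (Finset.filter_subset _ _)
              (fun i _ _ => hg0 _)
    have hc := hcard k
    rw [hncard] at hc
    linarith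
  have hμU : (Real.toNNReal ε : ℝ≥0∞) ≤ μ U := by
    rw [hμ_open U hU]
    refine le_trans ?_ (C.le_innerContent ⟨K, hK⟩ ⟨U, hU⟩ hKU)
    rw [hCval]
    exact_mod_cast Real.toNNReal_le_toNNReal hεle
  rw [h0] at hμU
  have h1 : Real.toNNReal ε = 0 := by simpa using hμU
  have h2 := Real.toNNReal_pos.mpr hε
  rw [h1] at h2
  exact lt_irrefl 0 h2

end KB

/-- A set containing the measure center is visited (up to `ε`)
with frequency at least `1 - ε`, uniformly in the starting point. -/
theorem measureCenter_visit_frequency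
    {X : Type*} [MetricSpace X] [CompactSpace X] [MeasurableSpace X] [BorelSpace X]
    (f : X → X) (hf : Continuous f)
    (A : Set X) (hA : measureCenter f ⊆ A) :
    ∀ ε : ℝ, 0 < ε → ∃ N : ℕ, ∀ x : X, ∀ n : ℕ, N ≤ n →
      1 - ε < (({i : ℕ | i < n ∧ Metric.infDist (f^[i] x) A < ε}).ncard : ℝ) / n := by
  classical
  intro ε hε
  set K : Set X := {y | ε ≤ Metric.infDist y A} with hKdef
  have hKc : IsClosed K := isClosed_le continuous_const (continuous_infDist_pt A)
  have hKcpt : IsCompact K := hKc.isCompact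
  -- a universally null open set containing K
  have hcover : K ⊆ ⋃ i : {U : Set X // IsOpen U ∧ UnivNull f U}, (i : Set X) := by
    intro y hy
    have hyA : y ∉ A := by
      intro hmem
      have h0 : Metric.infDist y A = 0 := Metric.infDist_zero_of_mem hmem
      have : ε ≤ 0 := by rw [← h0]; exact hy
      linarith
    have hyM : y ∉ measureCenter f := fun h => hyA (hA h)
    rw [measureCenter, Set.notMem_compl_iff] at hyM
    rw [Set.mem_iUnion₂] at hyM
    obtain ⟨V, hV, hyV⟩ := hyM
    exact Set.mem_iUnion.mpr ⟨⟨V, hV⟩, hyV⟩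
  obtain ⟨t, ht⟩ := hKcpt.elim_finite_subcover
    (fun i : {U : Set X // IsOpen U ∧ UnivNull f U} => (i : Set X))
    (fun i => i.2.1) hcover
  set U : Set X := ⋃ i ∈ t, (i : Set X) with hUdef
  have hUopen : IsOpen U := isOpen_biUnion fun i _ => i.2.1
  have hUnull : UnivNull f U := by
    intro μ hμ
    have hUeq : U = ⋃ i ∈ (↑t : Set {U : Set X // IsOpen U ∧ UnivNull f U}), (i : Set X) := by
      rw [hUdef]; simp
    rw [hUeq, measure_biUnion_null_iff t.countable_toSet]
    exact fun i _ => i.2.2 μ hμ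
  have hKU : K ⊆ U := ht
  by_contra hcon
  push_neg at hcon
  refine key_no_invariant f hf K U hKcpt hUopen hKU hUnull ε hε ?_
  intro N
  obtain ⟨x, nn, hn1, hn2⟩ := hcon (max N 1)
  refine ⟨x, nn, le_trans (le_max_left _ _) hn1, ?_⟩
  have hnn1 : 1 ≤ nn := le_trans (le_max_right N 1) hn1
  have hnnpos : 0 < (nn : ℝ) := by exact_mod_cast hnn1
  have hset : {i : ℕ | i < nn ∧ Metric.infDist (f^[i] x) A < ε}
      = ↑((Finset.range nn).filter fun i => Metric.infDist (f^[i] x) A < ε) := by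
    ext i; simp [Finset.mem_filter, Finset.mem_range]
  rw [hset, Set.ncard_coe_finset] at hn2
  have hset2 : {i : ℕ | i < nn ∧ f^[i] x ∈ K}
      = ↑((Finset.range nn).filter fun i => f^[i] x ∈ K) := by
    ext i; simp [Finset.mem_filter, Finset.mem_range]
  rw [hset2, Set.ncard_coe_finset]
  have hfeq : (Finset.range nn).filter (fun i => ¬ Metric.infDist (f^[i] x) A < ε)
      = (Finset.range nn).filter (fun i => f^[i] x ∈ K) := by
    refine Finset.filter_congr fun i _ => ?_
    simp [hKdef, not_lt]
  have hsplit := Finset.card_filter_add_card_filter_not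
    (s := Finset.range nn) (p := fun i => Metric.infDist (f^[i] x) A < ε)
  rw [hfeq, Finset.card_range] at hsplit
  set m' := ((Finset.range nn).filter fun i => Metric.infDist (f^[i] x) A < ε).card with hm'
  set m := ((Finset.range nn).filter fun i => f^[i] x ∈ K).card with hm
  have hmm : (m' : ℝ) + m = nn := by exact_mod_cast hsplit
  rw [div_le_iff₀ hnnpos] at hn2
  nlinarith [hn2, hmm]
end

section
/- Let (X,f) be a dynamical system with X a compact metric space and f : X → X a continuous surjection. If f has the average shadowing property, then f is chain mixing. -/
open Filter Metric Set MeasureTheory Topology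

section Aux

variable {X : Type*} [MetricSpace X]

lemma finChain_concat {f : X → X} {δ : ℝ} {p q : ℕ} {u v w : X}
    (h1 : FinChain f δ p u v) (h2 : FinChain f δ q v w) :
    FinChain f δ (p + q) u w := by
  obtain ⟨c1, hc10, hc1p, hc1s⟩ := h1
  obtain ⟨c2, hc20, hc2q, hc2s⟩ := h2
  refine ⟨fun t => if t ≤ p then c1 t else c2 (t - p), by simp [hc10], ?_, ?_⟩
  · rcases Nat.eq_zero_or_pos q with hq | hq
    · subst hq
      simp [hc1p, hc20.symm.trans hc2q]
    · have h : ¬ (p + q ≤ p) := by omega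
      have e : p + q - p = q := by omega
      simp only [if_neg h, e, hc2q]
  · intro i hi
    rcases lt_or_ge i p with h | h
    · have h1' : i ≤ p := h.le
      have h2' : i + 1 ≤ p := by omega
      simp only [if_pos h1', if_pos h2']
      exact hc1s i h
    · have h1' : ¬ (i + 1 ≤ p) := by omega
      have hip : i - p < q := by omega
      have e : i + 1 - p = (i - p) + 1 := by omega
      have key := hc2s (i - p) hip
      rcases Nat.eq_or_lt_of_le h with h' | h'
      · have e0 : i - p = 0 := by omega
        have : c2 (i - p) = c1 i := by rw [e0, hc20, ← h', hc1p]
        simp only [if_pos (le_of_eq h'.symm), if_neg h1', e, ← this]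
        exact key
      · have h2 : ¬ (i ≤ p) := by omega
        simp only [if_neg h2, if_neg h1', e]
        exact key

lemma finChain_refl {f : X → X} {δ : ℝ} (u : X) : FinChain f δ 0 u u :=
  ⟨fun _ => u, rfl, rfl, by omega⟩

lemma finChain_pow {f : X → X} {δ : ℝ} {p : ℕ} {u : X}
    (h : FinChain f δ p u u) : ∀ k : ℕ, FinChain f δ (k * p) u u := by
  intro k
  induction k with
  | zero => simpa using finChain_refl u
  | succ k ih => rw [Nat.succ_mul]; exact finChain_concat ih h

lemma exists_dist_bound' (X : Type*) [MetricSpace X] [CompactSpace X] :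
    ∃ C : ℝ, 1 ≤ C ∧ ∀ a b : X, dist a b ≤ C := by
  obtain ⟨C, hC⟩ := Metric.isBounded_iff.mp (isCompact_univ (X := X)).isBounded
  exact ⟨max C 1, le_max_right _ _, fun a b =>
    le_trans (hC (mem_univ a) (mem_univ b)) (le_max_left _ _)⟩

lemma avg_le_bound' {v : ℕ → ℝ} {C : ℝ} (hC : 0 ≤ C) (hv : ∀ i, v i ≤ C) (n : ℕ) :
    (∑ i ∈ Finset.range n, v i) / n ≤ C := by
  rcases Nat.eq_zero_or_pos n with hn | hn
  · simp [hn, hC]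
  · rw [div_le_iff₀ (by positivity)]
    calc ∑ i ∈ Finset.range n, v i ≤ ∑ _i ∈ Finset.range n, C :=
          Finset.sum_le_sum fun i _ => hv i
      _ = C * n := by simp [mul_comm]

lemma card_dvd_shift_le (L k n : ℕ) (hL : 0 < L) :
    ((Finset.range n).filter (fun i => L ∣ (i + k))).card ≤ n / L + 1 := by
  classical
  calc ((Finset.range n).filter (fun i => L ∣ (i + k))).card
      ≤ (Finset.range (n / L + 1)).card := ?_
    _ = n / L + 1 := Finset.card_range _
  apply Finset.card_le_card_of_injOn (fun i => i / L)
  · intro i hi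
    simp only [Finset.coe_filter, Finset.mem_coe, Finset.mem_filter, Finset.mem_range, mem_setOf_eq] at hi ⊢
    exact Nat.lt_succ_of_le (Nat.div_le_div_right hi.1.le)
  · intro i hi i' hi' he
    simp only [Finset.coe_filter, Finset.mem_range, mem_setOf_eq] at hi hi'
    -- both ≡ -k mod L and same quotient
    have h1 : L ∣ i % L + k := by
      have : i % L + k = i + k - L * (i / L) := by
        have := Nat.mod_add_div i L; omega
      rw [this]
      exact Nat.dvd_sub hi.2 (Dvd.intro _ rfl)
    have h2 : L ∣ i' % L + k := by
      have : i' % L + k = i' + k - L * (i' / L) := by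
        have := Nat.mod_add_div i' L; omega
      rw [this]
      exact Nat.dvd_sub hi'.2 (Dvd.intro _ rfl)
    have hm : i % L = i' % L := by
      rcases le_total (i % L) (i' % L) with hle | hle
      · have hd : L ∣ i' % L - i % L := by
          have : i' % L - i % L = (i' % L + k) - (i % L + k) := by omega
          rw [this]; exact Nat.dvd_sub h2 h1
        have := Nat.eq_zero_of_dvd_of_lt hd
        have hlt : i' % L - i % L < L := by
          have := Nat.mod_lt i' hL; omega
        rcases Nat.eq_zero_or_pos (i' % L - i % L) with h0 | h0
        · omega
        · exact absurd (Nat.le_of_dvd h0 hd) (by omega)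
      · have hd : L ∣ i % L - i' % L := by
          have : i % L - i' % L = (i % L + k) - (i' % L + k) := by omega
          rw [this]; exact Nat.dvd_sub h1 h2
        have hlt : i % L - i' % L < L := by
          have := Nat.mod_lt i hL; omega
        rcases Nat.eq_zero_or_pos (i % L - i' % L) with h0 | h0
        · omega
        · exact absurd (Nat.le_of_dvd h0 hd) (by omega)
    have he' : i / L = i' / L := he
    rw [← Nat.mod_add_div i L, ← Nat.mod_add_div i' L, hm, he']

set_option maxHeartbeats 1000000 in
lemma avgShadowing_chainTransitive' {X : Type*} [MetricSpace X] [CompactSpace X]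
    (f : X → X) (hf : Continuous f) (hsurj : Function.Surjective f)
    (h : AvgShadowing f) : ChainTransitive f := by
  intro δ hδ x y
  obtain ⟨C, hC1, hC⟩ := exists_dist_bound' X
  have hC0 : (0:ℝ) < C := lt_of_lt_of_le one_pos hC1
  obtain ⟨ε₁, hε₁, hu⟩ := (Metric.uniformContinuous_iff.mp
    (CompactSpace.uniformContinuous_of_continuous hf)) (δ/2) (by positivity)
  set ε := min ε₁ (δ/2) with hεdef
  have hε : 0 < ε := lt_min hε₁ (by positivity)
  have hεδ : ε ≤ δ/2 := min_le_right _ _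
  have hU : ∀ a b : X, dist a b < ε → dist (f a) (f b) < δ/2 :=
    fun a b hab => hu (lt_of_lt_of_le hab (min_le_left _ _))
  obtain ⟨β, hβ, hsh⟩ := h (ε/8) (by positivity)
  obtain ⟨L₀, hL₀⟩ := exists_nat_gt (2*C/β)
  obtain ⟨L, hL, hLpos⟩ : ∃ L : ℕ, 2*C/β < (L:ℝ) ∧ 0 < L :=
    ⟨L₀ + 1, lt_of_lt_of_le hL₀ (by exact_mod_cast Nat.le_succ _), Nat.succ_pos _⟩
  have hLr : (0:ℝ) < L := by exact_mod_cast hLpos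
  have hCL : C / L < β / 2 := by
    rw [div_lt_iff₀ hLr]
    rw [div_lt_iff₀ hβ] at hL
    nlinarith
  set P := 2 * L with hPdef
  have hPpos : 0 < P := by omega
  -- backward orbit through y
  obtain ⟨w, hw0, hw⟩ : ∃ w : ℕ → X, w 0 = y ∧ ∀ n, f (w (n+1)) = w n :=
    ⟨fun n => Nat.rec y (fun _ p => Classical.choose (hsurj p)) n, rfl,
      fun n => Classical.choose_spec (hsurj _)⟩
  -- the pseudo-orbit
  set ξ : ℕ → X := fun i => if i % P < L then f^[i % P] x else w (P - 1 - i % P) with hξdef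
  have hstep0 : ∀ i : ℕ, ¬ L ∣ (i+1) → dist (f (ξ i)) (ξ (i+1)) = 0 := by
    intro i hnd
    have hrlt : i % P < P := Nat.mod_lt _ hPpos
    have hieq : i = i % P + P * (i / P) := (Nat.mod_add_div i P).symm
    have hne1 : i % P + 1 ≠ L := by
      intro hcon
      refine hnd ⟨1 + 2 * (i / P), ?_⟩
      have h1 : i + 1 = L + P * (i / P) := by omega
      rw [h1, hPdef]; ring
    have hneP : i % P + 1 ≠ P := by
      intro hcon
      refine hnd ⟨2 + 2 * (i / P), ?_⟩
      have h1 : i + 1 = P + P * (i / P) := by omega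
      rw [h1, hPdef]; ring
    have hmod : (i+1) % P = i % P + 1 := by
      conv_lhs => rw [show i + 1 = (i % P + 1) + P * (i / P) by omega]
      rw [Nat.add_mul_mod_self_left]
      exact Nat.mod_eq_of_lt (by omega)
    by_cases hr : i % P < L
    · have hr1 : i % P + 1 < L := by omega
      have v1 : ξ i = f^[i % P] x := if_pos hr
      have v2 : ξ (i+1) = f^[i % P + 1] x := by
        rw [hξdef]; simp only [hmod, if_pos hr1]
      rw [v1, v2, Function.iterate_succ_apply', dist_self]
    · have hr1 : ¬ (i % P + 1 < L) := by omega
      have v1 : ξ i = w (P - 1 - i % P) := if_neg hr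
      have v2 : ξ (i+1) = w (P - 1 - (i % P + 1)) := by
        rw [hξdef]; simp only [hmod, if_neg hr1]
      have e : P - 1 - i % P = (P - 1 - (i % P + 1)) + 1 := by omega
      rw [v1, v2, e, hw, dist_self]
  -- ξ is a β-average pseudo-orbit
  obtain ⟨N₀, hN₀⟩ := exists_nat_gt (2*C/β)
  have hapo : AvgPseudoOrbit f β ξ := by
    refine ⟨N₀ + 1, by omega, fun n hn k => ?_⟩
    have hnr : (0:ℝ) < n := by
      have : 0 < n := by omega
      exact_mod_cast this
    have hsum : (∑ i ∈ Finset.range n, dist (f (ξ (i + k))) (ξ (i + k + 1)))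
        ≤ C * (((Finset.range n).filter (fun i => L ∣ (i + (k+1)))).card : ℝ) := by
      classical
      calc ∑ i ∈ Finset.range n, dist (f (ξ (i + k))) (ξ (i + k + 1))
          ≤ ∑ i ∈ Finset.range n, (if L ∣ (i + (k+1)) then C else 0) := by
            apply Finset.sum_le_sum
            intro i _
            by_cases hd : L ∣ (i + (k+1))
            · simpa [hd] using hC (f (ξ (i+k))) (ξ (i+k+1))
            · have : dist (f (ξ (i + k))) (ξ (i + k + 1)) = 0 := by
                have := hstep0 (i+k) (by rwa [show i + k + 1 = i + (k+1) by omega])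
                simpa [show i + k + 1 = (i+k) + 1 by omega] using this
              simp [hd, this]
        _ = ∑ i ∈ (Finset.range n).filter (fun i => L ∣ (i + (k+1))), C := by
            rw [Finset.sum_filter]
        _ = C * (((Finset.range n).filter (fun i => L ∣ (i + (k+1)))).card : ℝ) := by
            rw [Finset.sum_const, nsmul_eq_mul, mul_comm]
    have hcard := card_dvd_shift_le L (k+1) n hLpos
    have hcardr : (((Finset.range n).filter (fun i => L ∣ (i + (k+1)))).card : ℝ)
        ≤ (n:ℝ)/L + 1 := by
      calc (((Finset.range n).filter (fun i => L ∣ (i + (k+1)))).card : ℝ)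
          ≤ ((n / L + 1 : ℕ) : ℝ) := by exact_mod_cast hcard
        _ ≤ (n:ℝ)/L + 1 := by
            push_cast
            have := Nat.cast_div_le (m := n) (n := L) (α := ℝ)
            linarith
    have h1 : (∑ i ∈ Finset.range n, dist (f (ξ (i + k))) (ξ (i + k + 1))) / n
        ≤ (C * ((n:ℝ)/L + 1)) / n := by
      apply div_le_div_of_nonneg_right ?_ hnr.le
      · calc _ ≤ C * (((Finset.range n).filter (fun i => L ∣ (i + (k+1)))).card : ℝ) := hsum
          _ ≤ C * ((n:ℝ)/L + 1) := mul_le_mul_of_nonneg_left hcardr hC0.le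
    refine lt_of_le_of_lt h1 ?_
    have e : (C * ((n:ℝ)/L + 1)) / n = C / L + C / n := by
      field_simp
    rw [e]
    have h2 : C / n < β / 2 := by
      rw [div_lt_iff₀ hnr]
      rw [div_lt_iff₀ hβ] at hN₀
      have hnN : (N₀:ℝ) < n := by
        have : N₀ < n := by omega
        exact_mod_cast this
      nlinarith
    linarith
  obtain ⟨z, hz⟩ := hsh ξ hapo
  -- eventually the average is small
  have hbdd : Filter.IsBoundedUnder (· ≤ ·) atTop
      (fun n : ℕ => (∑ i ∈ Finset.range n, dist (f^[i] z) (ξ i)) / n) :=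
    isBoundedUnder_of ⟨C, fun n => avg_le_bound' hC0.le (fun i => hC _ _) n⟩
  have hev := eventually_lt_of_limsup_lt hz hbdd
  obtain ⟨N₂, hN₂⟩ := Filter.eventually_atTop.mp hev
  -- main claim: good times in both kinds of blocks
  have claim : ∀ o : ℕ, o + L ≤ P → ∀ M : ℕ, ∃ i, M ≤ i ∧ o ≤ i % P ∧ i % P < o + L ∧
      dist (f^[i] z) (ξ i) < ε := by
    intro o ho M
    by_contra hcon
    push_neg at hcon
    set m := max (max M N₂) 1 with hmdef
    have hm1 : 1 ≤ m := le_max_right _ _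
    have hmM : M ≤ m := le_trans (le_max_left _ _) (le_max_left _ _)
    have hmN : N₂ ≤ m := le_trans (le_max_right _ _) (le_max_left _ _)
    set n := P * (M + m) with hndef
    have hnN₂ : N₂ ≤ n := by
      calc N₂ ≤ m := hmN
        _ ≤ P * (M + m) := by
          have h1 : m ≤ P * m := Nat.le_mul_of_pos_left m hPpos
          have h2 : P * m ≤ P * (M + m) := Nat.mul_le_mul_left P (by omega)
          omega
    have hup := hN₂ n hnN₂
    classical
    set S := (Finset.range m ×ˢ Finset.range L).image
      (fun ts : ℕ × ℕ => P * (M + ts.1) + o + ts.2) with hSdef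
    have hinj : Set.InjOn (fun ts : ℕ × ℕ => P * (M + ts.1) + o + ts.2)
        (↑(Finset.range m ×ˢ Finset.range L)) := by
      intro a ha b hb he
      simp only [Finset.coe_product, Finset.mem_coe, mem_prod, Finset.mem_range,
        Finset.mem_coe, Finset.mem_product] at ha hb
      simp only at he
      have hmod : (P * (M + a.1) + o + a.2) % P = o + a.2 := by
        rw [show P * (M + a.1) + o + a.2 = (o + a.2) + P * (M + a.1) by ring,
          Nat.add_mul_mod_self_left]
        exact Nat.mod_eq_of_lt (by omega)
      have hmod' : (P * (M + b.1) + o + b.2) % P = o + b.2 := by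
        rw [show P * (M + b.1) + o + b.2 = (o + b.2) + P * (M + b.1) by ring,
          Nat.add_mul_mod_self_left]
        exact Nat.mod_eq_of_lt (by omega)
      have h2 : a.2 = b.2 := by
        have := hmod ▸ he ▸ hmod'
        omega
      have h1 : a.1 = b.1 := by
        have : P * (M + a.1) = P * (M + b.1) := by omega
        have := Nat.eq_of_mul_eq_mul_left hPpos this
        omega
      exact Prod.ext h1 h2
    have hScard : S.card = m * L := by
      rw [hSdef, Finset.card_image_of_injOn hinj, Finset.card_product,
        Finset.card_range, Finset.card_range]
    have hSsub : S ⊆ Finset.range n := by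
      intro p hp
      simp only [hSdef, Finset.mem_image, Finset.mem_product, Finset.mem_range] at hp
      obtain ⟨⟨t, s⟩, ⟨ht, hs⟩, rfl⟩ := hp
      dsimp only
      simp only [Finset.mem_range]
      calc P * (M + t) + o + s < P * (M + t) + P := by omega
        _ = P * (M + t + 1) := by ring
        _ ≤ P * (M + m) := Nat.mul_le_mul_left _ (by omega)
    have hSbig : ∀ p ∈ S, ε ≤ dist (f^[p] z) (ξ p) := by
      intro p hp
      simp only [hSdef, Finset.mem_image, Finset.mem_product, Finset.mem_range] at hp
      obtain ⟨⟨t, s⟩, ⟨ht, hs⟩, rfl⟩ := hp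
      dsimp only
      have hmod : (P * (M + t) + o + s) % P = o + s := by
        rw [show P * (M + t) + o + s = (o + s) + P * (M + t) by ring,
          Nat.add_mul_mod_self_left]
        exact Nat.mod_eq_of_lt (by omega)
      have hge : M ≤ P * (M + t) + o + s := by
        have h1 : M ≤ P * M := Nat.le_mul_of_pos_left M hPpos
        have h2 : P * M ≤ P * (M + t) := Nat.mul_le_mul_left P (by omega)
        omega
      exact hcon _ hge (by omega) (by omega)
    have hsumlb : ε * (m * L) ≤ ∑ i ∈ Finset.range n, dist (f^[i] z) (ξ i) := by
      calc ε * (m * L) = ∑ _p ∈ S, ε := by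
            rw [Finset.sum_const, hScard]; push_cast; ring
        _ ≤ ∑ p ∈ S, dist (f^[p] z) (ξ p) := Finset.sum_le_sum hSbig
        _ ≤ ∑ i ∈ Finset.range n, dist (f^[i] z) (ξ i) :=
            Finset.sum_le_sum_of_subset_of_nonneg hSsub (fun _ _ _ => dist_nonneg)
    have hnr : (0:ℝ) < n := by
      have : 0 < n := by positivity
      exact_mod_cast this
    rw [div_lt_iff₀ hnr] at hup
    have hcast : (n:ℝ) = 2 * L * (M + m) := by
      rw [hndef]; push_cast [hPdef]; ring
    have hMm : (M:ℝ) ≤ m := by exact_mod_cast hmM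
    have hm1r : (1:ℝ) ≤ m := by exact_mod_cast hm1
    have key : ε * (m * L) < ε / 8 * (2 * L * (M + m)) := by
      calc ε * (m * L) ≤ ∑ i ∈ Finset.range n, dist (f^[i] z) (ξ i) := hsumlb
        _ < ε / 8 * n := hup
        _ = ε / 8 * (2 * L * (M + m)) := by rw [hcast]
    have h2 : ε * L * M ≤ ε * L * m :=
      mul_le_mul_of_nonneg_left hMm (mul_pos hε hLr).le
    have h3 : ε * L * 1 ≤ ε * L * m :=
      mul_le_mul_of_nonneg_left hm1r (mul_pos hε hLr).le
    have h4 : (0:ℝ) < ε * L := mul_pos hε hLr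
    nlinarith [key, h2, h3, h4]
  -- pick good times
  obtain ⟨i, _, hi1, hi2, hi3⟩ := claim 0 (by omega) 0
  obtain ⟨j, hji, hj1, hj2, hj3⟩ := claim L (by omega) (i + 1)
  have hiL : i % P < L := by omega
  have hξi : ξ i = f^[i % P] x := if_pos hiL
  have hξj : ξ j = w (P - 1 - j % P) := if_neg (by omega)
  set a := i % P with hadef
  set s := P - 1 - j % P with hsdef
  have K1 : dist (f^[a] x) (f^[i] z) < ε := by
    rw [← hξi, dist_comm]; exact hi3
  have K2 : dist (f^[j] z) (w s) < ε := by rw [← hξj]; exact hj3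
  -- three chain pieces
  have P1 : FinChain f δ a x (f^[a] x) :=
    ⟨fun t => f^[t] x, by simp, rfl, fun t ht => by
      dsimp only
      rw [Function.iterate_succ_apply', dist_self]; exact hδ⟩
  have P3 : FinChain f δ s (w s) y := by
    refine ⟨fun t => w (s - t), by simp, by simp [hw0], fun t ht => ?_⟩
    dsimp only
    have e : s - t = (s - (t+1)) + 1 := by omega
    rw [e, hw, dist_self]; exact hδ
  have P2 : FinChain f δ (j - i) (f^[a] x) (w s) := by
    have hd : 1 ≤ j - i := by omega
    set c : ℕ → X := fun t => if t = 0 then f^[a] x else if t < j - i then f^[i + t] z else w s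
      with hcdef
    have hc0 : c 0 = f^[a] x := by simp [hcdef]
    have hcmid : ∀ t, t ≠ 0 → t < j - i → c t = f^[i + t] z := by
      intro t h1 h2; simp [hcdef, h1, h2]
    have hcend : ∀ t, t ≠ 0 → ¬ (t < j - i) → c t = w s := by
      intro t h1 h2; simp [hcdef, h1, h2]
    refine ⟨c, hc0, hcend (j - i) (by omega) (by omega), fun t ht => ?_⟩
    by_cases ht0 : t = 0
    · subst ht0
      rw [hc0]
      by_cases h1 : 1 < j - i
      · rw [hcmid 1 one_ne_zero h1]
        have hit : f^[i + 1] z = f (f^[i] z) := Function.iterate_succ_apply' f i z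
        rw [hit]
        exact lt_trans (hU _ _ K1) (by linarith)
      · have hjeq : j = i + 1 := by omega
        rw [hcend 1 one_ne_zero (by omega)]
        calc dist (f (f^[a] x)) (w s)
            ≤ dist (f (f^[a] x)) (f (f^[i] z)) + dist (f (f^[i] z)) (w s) :=
              dist_triangle _ _ _
          _ < δ/2 + δ/2 := by
              apply add_lt_add (hU _ _ K1)
              have hfz : f (f^[i] z) = f^[j] z := by
                rw [hjeq]
                exact (Function.iterate_succ_apply' f i z).symm
              rw [hfz]
              exact lt_of_lt_of_le K2 hεδ
          _ = δ := by ring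
    · rw [hcmid t ht0 ht]
      by_cases ht2 : t + 1 < j - i
      · rw [hcmid (t+1) (by omega) ht2]
        have e : i + (t + 1) = (i + t) + 1 := by omega
        rw [e, Function.iterate_succ_apply', dist_self]
        exact hδ
      · rw [hcend (t+1) (by omega) ht2]
        have e2 : f (f^[i + t] z) = f^[j] z := by
          have ej : i + t + 1 = j := by omega
          calc f (f^[i + t] z) = f^[i + t + 1] z :=
                (Function.iterate_succ_apply' f (i + t) z).symm
            _ = f^[j] z := by rw [ej]
        rw [e2]
        exact lt_of_lt_of_le K2 (by linarith)
  exact ⟨a + (j - i) + s, by omega,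
    finChain_concat (finChain_concat P1 P2) P3⟩

lemma avgShadowing_prod {X : Type*} [MetricSpace X] [CompactSpace X]
    {f : X → X} (h : AvgShadowing f) : AvgShadowing (Prod.map f f) := by
  intro ε hε
  obtain ⟨δ, hδ, hsh⟩ := h (ε/3) (by positivity)
  refine ⟨δ, hδ, ?_⟩
  rintro p ⟨N, hN, hp⟩
  have h1 : AvgPseudoOrbit f δ (fun n => (p n).1) := by
    refine ⟨N, hN, fun n hn k => ?_⟩
    refine lt_of_le_of_lt ?_ (hp n hn k)
    have hnn : (0:ℝ) ≤ n := Nat.cast_nonneg n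
    apply div_le_div_of_nonneg_right ?_ hnn
    apply Finset.sum_le_sum
    intro i _
    rw [Prod.dist_eq]
    exact le_max_left _ _
  have h2 : AvgPseudoOrbit f δ (fun n => (p n).2) := by
    refine ⟨N, hN, fun n hn k => ?_⟩
    refine lt_of_le_of_lt ?_ (hp n hn k)
    have hnn : (0:ℝ) ≤ n := Nat.cast_nonneg n
    apply div_le_div_of_nonneg_right ?_ hnn
    apply Finset.sum_le_sum
    intro i _
    rw [Prod.dist_eq]
    exact le_max_right _ _
  obtain ⟨z₁, hz₁⟩ := hsh _ h1
  obtain ⟨z₂, hz₂⟩ := hsh _ h2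
  refine ⟨(z₁, z₂), ?_⟩
  obtain ⟨C, hC1, hC⟩ := exists_dist_bound' X
  have hC0 : (0:ℝ) < C := lt_of_lt_of_le one_pos hC1
  set u1 : ℕ → ℝ := fun n => (∑ i ∈ Finset.range n, dist (f^[i] z₁) ((p i).1)) / n with hu1
  set u2 : ℕ → ℝ := fun n => (∑ i ∈ Finset.range n, dist (f^[i] z₂) ((p i).2)) / n with hu2
  set u : ℕ → ℝ := fun n =>
    (∑ i ∈ Finset.range n, dist ((Prod.map f f)^[i] (z₁, z₂)) (p i)) / n with hu
  have hub : ∀ n, u n ≤ u1 n + u2 n := by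
    intro n
    rw [hu, hu1, hu2]
    dsimp only
    rw [← add_div]
    have hnn : (0:ℝ) ≤ n := Nat.cast_nonneg n
    apply div_le_div_of_nonneg_right ?_ hnn
    rw [← Finset.sum_add_distrib]
    apply Finset.sum_le_sum
    intro i _
    rw [Prod.map_iterate, Prod.dist_eq]
    exact max_le (le_add_of_nonneg_right dist_nonneg) (le_add_of_nonneg_left dist_nonneg)
  have hbdd1 : Filter.IsBoundedUnder (· ≤ ·) atTop u1 :=
    isBoundedUnder_of ⟨C, fun n => avg_le_bound' hC0.le (fun i => hC _ _) n⟩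
  have hbdd2 : Filter.IsBoundedUnder (· ≤ ·) atTop u2 :=
    isBoundedUnder_of ⟨C, fun n => avg_le_bound' hC0.le (fun i => hC _ _) n⟩
  have hev1 := eventually_lt_of_limsup_lt hz₁ hbdd1
  have hev2 := eventually_lt_of_limsup_lt hz₂ hbdd2
  have hev : ∀ᶠ n in atTop, u n ≤ 2*ε/3 := by
    filter_upwards [hev1, hev2] with n h1' h2'
    have := hub n
    linarith
  have hcb : Filter.IsCoboundedUnder (· ≤ ·) atTop u := by
    apply Filter.IsBoundedUnder.isCoboundedUnder_le
    refine isBoundedUnder_of ⟨0, fun n => ?_⟩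
    rw [hu]
    positivity
  calc limsup u atTop ≤ 2*ε/3 := limsup_le_of_le hcb hev
    _ < ε := by linarith

lemma chainTransitive_prod_chainMixing {X : Type*} [MetricSpace X]
    {f : X → X} (hct : ChainTransitive (Prod.map f f)) : ChainMixing f := by
  have pair : ∀ (u v : X) (δ : ℝ), 0 < δ →
      ∃ n, 0 < n ∧ FinChain f δ n u v ∧ FinChain f δ (n+1) u v := by
    intro u v δ hδ
    obtain ⟨n, hn, c, hc0, hcn, hcs⟩ := hct δ hδ (u, f u) (v, v)
    refine ⟨n, hn, ⟨fun i => (c i).1, by simp [hc0], by simp [hcn], fun i hi => ?_⟩, ?_⟩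
    · have := hcs i hi
      rw [Prod.dist_eq] at this
      exact lt_of_le_of_lt (le_max_left _ _) this
    · set c2 : ℕ → X := fun i => if i = 0 then u else (c (i-1)).2 with hc2def
      have hv0 : c2 0 = u := by simp [hc2def]
      have hvs : ∀ i : ℕ, i ≠ 0 → c2 i = (c (i-1)).2 := fun i h => by simp [hc2def, h]
      refine ⟨c2, hv0, by rw [hvs (n+1) (by omega)]; simp [hcn], fun i hi => ?_⟩
      by_cases hi0 : i = 0
      · subst hi0
        rw [hv0, hvs 1 one_ne_zero]
        norm_num
        rw [hc0]
        simpa using hδ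
      · rw [hvs i hi0, hvs (i+1) (by omega)]
        have hstep := hcs (i-1) (by omega)
        rw [Prod.dist_eq] at hstep
        have e : i + 1 - 1 = (i - 1) + 1 := by omega
        rw [e]
        exact lt_of_le_of_lt (le_max_right _ _) hstep
  intro δ hδ x y
  obtain ⟨m, hm, hmx, hmx1⟩ := pair x x δ hδ
  obtain ⟨a, ha, hxy, _⟩ := pair x y δ hδ
  refine ⟨m*m + a, by positivity, fun n hn => ?_⟩
  have hk : m*m ≤ n - a := by omega
  set k := n - a with hkdef
  set q := k / m with hqdef
  set r := k % m with hrdef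
  have hrm : r < m := Nat.mod_lt _ hm
  have hrq : r ≤ q := by
    have : m ≤ q := by
      rw [hqdef]
      rw [Nat.le_div_iff_mul_le hm]
      nlinarith
    omega
  have hdecomp : (q - r) * m + r * (m+1) + a = n := by
    have e3 : m * q + r = k := Nat.div_add_mod k m
    obtain ⟨d, hd⟩ := Nat.le.dest hrq
    have e1 : (q - r) * m + r * (m+1) = m * q + r := by
      rw [← hd, Nat.add_sub_cancel_left]
      ring
    omega
  have hchain := finChain_concat (finChain_concat
    (finChain_pow hmx (q - r)) (finChain_pow hmx1 r)) hxy
  rwa [hdecomp] at hchain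

end Aux

/-- A continuous surjection of a compact metric space with the
average shadowing property is chain mixing. -/
theorem avgShadowing_implies_chainMixing
    {X : Type*} [MetricSpace X] [CompactSpace X]
    (f : X → X) (hf : Continuous f) (hsurj : Function.Surjective f)
    (h : AvgShadowing f) : ChainMixing f := by
  have hct : ChainTransitive (Prod.map f f) :=
    avgShadowing_chainTransitive' (Prod.map f f) (hf.prodMap hf)
      (hsurj.prodMap hsurj) (avgShadowing_prod h)
  exact chainTransitive_prod_chainMixing hct
end

section
/- Let (X,f) be a dynamical system with X a compact metric space and f : X → X a continuous surjection. If f has the almost specification property, then f is chain mixing. -/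
open Filter Metric Set MeasureTheory Topology

/-- A continuous surjection of a compact metric space with the
almost specification property is chain mixing. -/
theorem almostSpec_implies_chainMixing
    {X : Type*} [MetricSpace X] [CompactSpace X]
    (f : X → X) (hf : Continuous f) (hsurj : Function.Surjective f)
    (h : AlmostSpec f) : ChainMixing f := by
  obtain ⟨g, ε₀, kg, hmist, hAS⟩ := h
  intro δ hδ x y
  -- uniform continuity
  obtain ⟨ε₁, hε₁, hUC⟩ := Metric.uniformContinuous_iff.mp
    (CompactSpace.uniformContinuous_of_continuous hf) δ hδ
  set ε := min ε₁ ε₀ with hεdef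
  have hε : 0 < ε := lt_min hε₁ hmist.pos
  have hεε₀ : ε ≤ ε₀ := min_le_right _ _
  have hUC' : ∀ a b : X, dist a b < ε → dist (f a) (f b) < δ := fun a b hab =>
    hUC (lt_of_lt_of_le hab (min_le_left _ _))
  have hev : ∀ᶠ n : ℕ in atTop, (g n ε : ℝ) / n < 1 :=
    (hmist.small ε hε hεε₀).eventually (gt_mem_nhds one_pos)
  obtain ⟨M₀, hM₀⟩ := eventually_atTop.mp hev
  set M := max (max M₀ (kg ε)) 1 with hMdef
  have hM1 : 1 ≤ M := le_max_right _ _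
  have hMkg : kg ε ≤ M := le_trans (le_max_right _ _) (le_max_left _ _)
  have hg : ∀ n' : ℕ, M ≤ n' → g n' ε < n' := by
    intro n' hn'
    have h1 : (1 : ℕ) ≤ n' := le_trans hM1 hn'
    have h2 := hM₀ n' (le_trans (le_trans (le_max_left _ _) (le_max_left _ _)) hn')
    have hpos : (0 : ℝ) < (n' : ℝ) := by exact_mod_cast h1
    have h3 : (g n' ε : ℝ) < (n' : ℝ) := by
      rw [div_lt_one hpos] at h2; exact h2
    exact_mod_cast h3
  refine ⟨2 * M, by omega, ?_⟩
  intro n hn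
  set n₂ := n - M with hn₂def
  have hn₂ : M ≤ n₂ := by omega
  have hnsum : n = M + n₂ := by omega
  obtain ⟨w, hw⟩ : ∃ w, f^[n₂] w = y := (hsurj.iterate n₂) y
  obtain ⟨z, hz⟩ := hAS 2 (by norm_num) (fun _ => ε)
    (fun j => if j = 1 then x else w) (fun j => if j = 1 then M else n₂)
    (fun j _ _ => hε)
    (fun j h1 h2 => by interval_cases j <;> simp [hMkg, le_trans hMkg hn₂])
  have h1 := hz 1 le_rfl one_le_two
  have h2 := hz 2 (by norm_num) le_rfl
  have hIco1 : Finset.Ico 1 1 = (∅ : Finset ℕ) := by decide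
  have hIco2 : Finset.Ico 1 2 = ({1} : Finset ℕ) := by decide
  rw [hIco1] at h1
  rw [hIco2] at h2
  simp only [Finset.sum_empty, Finset.sum_singleton, if_pos rfl,
    Function.iterate_zero_apply] at h1 h2
  norm_num at h2
  -- extract matched times
  simp only [mistakeBowenBall, Set.mem_iUnion, Set.mem_setOf_eq] at h1 h2
  obtain ⟨Λ₁, ⟨hΛ₁sub, hΛ₁card⟩, hΛ₁⟩ := h1
  obtain ⟨Λ₂, ⟨hΛ₂sub, hΛ₂card⟩, hΛ₂⟩ := h2
  have hΛ₁ne : Λ₁.Nonempty := Finset.card_pos.mp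
    (lt_of_lt_of_le (Nat.sub_pos_of_lt (hg M le_rfl)) hΛ₁card)
  have hΛ₂ne : Λ₂.Nonempty := Finset.card_pos.mp
    (lt_of_lt_of_le (Nat.sub_pos_of_lt (hg n₂ hn₂)) hΛ₂card)
  obtain ⟨i, hi⟩ := hΛ₁ne
  obtain ⟨k, hk⟩ := hΛ₂ne
  have hiM : i < M := Finset.mem_range.mp (hΛ₁sub hi)
  have hkn₂ : k < n₂ := Finset.mem_range.mp (hΛ₂sub hk)
  have hdi : dist (f^[i] x) (f^[i] z) < ε := hΛ₁ i hi
  have hdk : dist (f^[k] w) (f^[k] (f^[M] z)) < ε := hΛ₂ k hk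
  -- the chain
  refine ⟨fun t => if t ≤ i then f^[t] x else if t ≤ M + k then f^[t] z
    else f^[t - M] w, by simp, ?_, ?_⟩
  · have hni : ¬ n ≤ i := by omega
    have hnk : ¬ n ≤ M + k := by omega
    simp only [if_neg hni, if_neg hnk]
    rw [show n - M = n₂ by omega, hw]
  · intro t ht
    beta_reduce
    rcases lt_trichotomy t i with htc | htc | htc
    · -- within orbit of x
      rw [if_pos htc.le, if_pos (by omega : t + 1 ≤ i),
        ← Function.iterate_succ_apply' f t x]
      simpa using hδ
    · -- jump from orbit of x to orbit of z
      subst htc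
      rw [if_pos le_rfl, if_neg (Nat.not_succ_le_self t),
        if_pos (by omega : t + 1 ≤ M + k),
        Function.iterate_succ_apply' f t z]
      exact hUC' _ _ hdi
    · rcases lt_trichotomy t (M + k) with htk | htk | htk
      · -- within orbit of z
        rw [if_neg (by omega : ¬ t ≤ i), if_pos htk.le,
          if_neg (by omega : ¬ t + 1 ≤ i), if_pos (by omega : t + 1 ≤ M + k),
          ← Function.iterate_succ_apply' f t z]
        simpa using hδ
      · -- jump from orbit of z to orbit of w
        subst htk
        rw [if_neg (by omega : ¬ M + k ≤ i), if_pos le_rfl,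
          if_neg (by omega : ¬ M + k + 1 ≤ i),
          if_neg (by omega : ¬ M + k + 1 ≤ M + k),
          show M + k + 1 - M = k + 1 by omega,
          Function.iterate_succ_apply' f k w,
          show M + k = k + M from Nat.add_comm M k,
          Function.iterate_add_apply f k M z]
        have := hUC' _ _ hdk
        rwa [dist_comm] at this
      · -- within orbit of w
        rw [if_neg (by omega : ¬ t ≤ i), if_neg (by omega : ¬ t ≤ M + k),
          if_neg (by omega : ¬ t + 1 ≤ i), if_neg (by omega : ¬ t + 1 ≤ M + k),
          show t + 1 - M = (t - M) + 1 by omega,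
          ← Function.iterate_succ_apply' f (t - M) w]
        simpa using hδ
end

section
/- Let (X,f) be a dynamical system with X a compact metric space and f : X → X continuous. If f is chain mixing and {x_j}_{j≥0} is an asymptotic average pseudo-orbit of f, then there exists an asymptotic pseudo-orbit {y_j}_{j≥0} of f such that the set {j ∈ ℕ : x_j ≠ y_j} has asymptotic density zero. -/
open Filter Metric Set MeasureTheory Topology

theorem uniformChainMixing {X : Type*} [MetricSpace X] [CompactSpace X]
    (f : X → X) (hf : Continuous f) (hcm : ChainMixing f) (δ : ℝ) (hδ : 0 < δ) :
    ∃ N : ℕ, 0 < N ∧ ∀ n, N ≤ n → ∀ u v : X, FinChain f δ n u v := by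
  classical
  have hδ3 : 0 < δ / 3 := by linarith
  obtain ⟨η, hη, hηf⟩ := Metric.uniformContinuous_iff.mp
    (CompactSpace.uniformContinuous_of_continuous hf) (δ / 3) hδ3
  have hrpos : 0 < min η (δ / 3) := lt_min hη hδ3
  obtain ⟨t, -, htfin, htcov⟩ := finite_cover_balls_of_compact (isCompact_univ (X := X)) hrpos
  have hcm' : ∀ p q : X, ∃ N : ℕ, 0 < N ∧ ∀ n : ℕ, N ≤ n → FinChain f (δ / 3) n p q :=
    fun p q => hcm (δ / 3) hδ3 p q
  choose F hFpos hFchain using hcm'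
  obtain ⟨N₀, hN₀⟩ := ((htfin.prod htfin).image fun p : X × X => F p.1 p.2).bddAbove
  refine ⟨N₀ + 1, Nat.succ_pos _, fun n hn u v => ?_⟩
  have hu := htcov (Set.mem_univ u)
  have hv := htcov (Set.mem_univ v)
  simp only [Set.mem_iUnion, Metric.mem_ball, exists_prop] at hu hv
  obtain ⟨p, hp, hup⟩ := hu
  obtain ⟨q, hq, hvq⟩ := hv
  have hFn : F p q ≤ n := by
    have : F p q ≤ N₀ := hN₀ ⟨(p, q), Set.mem_prod.2 ⟨hp, hq⟩, rfl⟩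
    omega
  obtain ⟨cc, hc0, hcn, hcs⟩ := hFchain p q n hFn
  have hn1 : 1 ≤ n := by omega
  have hfup : dist (f u) (f p) < δ / 3 := hηf (lt_of_lt_of_le hup (min_le_left _ _))
  have hvq3 : dist v q < δ / 3 := lt_of_lt_of_le hvq (min_le_right _ _)
  refine ⟨fun i => if i = 0 then u else if i = n then v else cc i, by simp, by
    simp [Nat.one_le_iff_ne_zero.mp hn1], ?_⟩
  intro i hi
  show dist (f (if i = 0 then u else if i = n then v else cc i))
      (if i + 1 = 0 then u else if i + 1 = n then v else cc (i + 1)) < δ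
  have hin : i ≠ n := Nat.ne_of_lt hi
  by_cases h0 : i = 0
  · subst h0
    simp only [if_pos rfl]
    by_cases h1 : n = 1
    · have e1 : (if 1 = 0 then u else if 1 = n then v else cc 1) = v := by
        simp [h1]
      rw [e1]
      have hq1 : cc 1 = q := by rw [← h1]; exact hcn
      have hs0 : dist (f (cc 0)) (cc 1) < δ / 3 := hcs 0 hi
      rw [hc0] at hs0
      calc dist (f u) v ≤ dist (f u) (f p) + dist (f p) (cc 1) + dist (cc 1) v :=
            dist_triangle4 _ _ _ _
        _ < δ / 3 + δ / 3 + δ / 3 := by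
            rw [hq1]
            have : dist q v = dist v q := dist_comm _ _
            rw [hq1] at hs0
            linarith
        _ = δ := by ring
    · have e1 : (if 1 = 0 then u else if 1 = n then v else cc 1) = cc 1 := by
        simp [Ne.symm h1]
      rw [e1]
      have hs0 : dist (f (cc 0)) (cc 1) < δ / 3 := hcs 0 hi
      rw [hc0] at hs0
      calc dist (f u) (cc 1) ≤ dist (f u) (f p) + dist (f p) (cc 1) := dist_triangle _ _ _
        _ < δ / 3 + δ / 3 := by linarith
        _ < δ := by linarith
  · have ei : (if i = 0 then u else if i = n then v else cc i) = cc i := by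
      simp [h0, hin]
    rw [ei]
    by_cases h2 : i + 1 = n
    · have e2 : (if i + 1 = 0 then u else if i + 1 = n then v else cc (i + 1)) = v := by
        rw [if_neg (by omega : ¬ i + 1 = 0), if_pos h2]
      rw [e2]
      have hs : dist (f (cc i)) (cc (i + 1)) < δ / 3 := hcs i hi
      have hcq : cc (i + 1) = q := by rw [h2, hcn]
      calc dist (f (cc i)) v ≤ dist (f (cc i)) (cc (i + 1)) + dist (cc (i + 1)) v :=
            dist_triangle _ _ _
        _ < δ / 3 + δ / 3 := by
            rw [hcq] at hs ⊢
            have : dist q v = dist v q := dist_comm _ _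
            linarith
        _ < δ := by linarith
    · have e2 : (if i + 1 = 0 then u else if i + 1 = n then v else cc (i + 1)) = cc (i + 1) := by
        simp [h2]
      rw [e2]
      exact lt_trans (hcs i hi) (by linarith)

/-- In a chain mixing compact system, every asymptotic average
pseudo-orbit agrees, outside a set of indices of density zero, with an
asymptotic pseudo-orbit. -/
theorem asympPseudoOrbit_from_asympAvgPseudoOrbit
    {X : Type*} [MetricSpace X] [CompactSpace X]
    (f : X → X) (hf : Continuous f) (hcm : ChainMixing f)
    (x : ℕ → X) (hx : AsympAvgPseudoOrbit f x) :
    ∃ y : ℕ → X,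
      Tendsto (fun i : ℕ => dist (f (y i)) (y (i + 1))) atTop (nhds 0) ∧
      HasDensity {j : ℕ | x j ≠ y j} 0 := by
  classical
  have hx' : Tendsto (fun n : ℕ =>
      (∑ i ∈ Finset.range n, dist (f (x i)) (x (i + 1))) / n) atTop (nhds 0) := hx
  -- uniform chain mixing data
  have hNex : ∀ k : ℕ, ∃ Nk : ℕ, 0 < Nk ∧ ∀ n, Nk ≤ n → ∀ u v : X,
      FinChain f (1 / ((k : ℝ) + 1)) n u v :=
    fun k => uniformChainMixing f hf hcm _ (by positivity)
  choose N hNpos hNchain using hNex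
  have hcex : ∀ k s : ℕ, ∃ c : ℕ → X, c 0 = x s ∧ c (N k) = x (s + N k) ∧
      ∀ i < N k, dist (f (c i)) (c (i + 1)) < 1 / ((k : ℝ) + 1) :=
    fun k s => hNchain k (N k) le_rfl (x s) (x (s + N k))
  choose cc hcc0 hccN hccstep using hcex
  -- density thresholds
  have hTex : ∀ k : ℕ, ∃ T : ℕ, ∀ m, T ≤ m →
      2 * (N k : ℝ) * (((Finset.range m).filter fun i =>
        1 / ((k : ℝ) + 1) ≤ dist (f (x i)) (x (i + 1))).card : ℝ) ≤ (m : ℝ) / 2 ^ (k + 2) := by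
    intro k
    have hk1 : (0 : ℝ) < (k : ℝ) + 1 := by positivity
    set B : ℝ := (2 * (N k : ℝ) + 1) * ((k : ℝ) + 1) with hB
    have hBpos : 0 < B := by positivity
    set cst : ℝ := ((1 : ℝ) / 2 ^ (k + 2)) / B with hcst
    have hcpos : 0 < cst := by positivity
    have hev : ∀ᶠ m : ℕ in atTop,
        (∑ i ∈ Finset.range m, dist (f (x i)) (x (i + 1))) / m < cst :=
      hx'.eventually (gt_mem_nhds hcpos)
    obtain ⟨T0, hT0⟩ := eventually_atTop.mp hev
    refine ⟨T0 + 1, fun m hm => ?_⟩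
    have hm1 : 1 ≤ m := by omega
    have hmpos : (0 : ℝ) < m := by exact_mod_cast hm1
    have hS := hT0 m (by omega)
    set S := ∑ i ∈ Finset.range m, dist (f (x i)) (x (i + 1)) with hSdef
    have hSm : S < cst * m := by rwa [div_lt_iff₀ hmpos] at hS
    have hSnn : 0 ≤ S := Finset.sum_nonneg fun i _ => dist_nonneg
    set C := ((Finset.range m).filter fun i =>
      1 / ((k : ℝ) + 1) ≤ dist (f (x i)) (x (i + 1))).card with hCdef
    have hMar : (C : ℝ) * (1 / ((k : ℝ) + 1)) ≤ S := by
      calc (C : ℝ) * (1 / ((k : ℝ) + 1))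
          = ∑ _i ∈ (Finset.range m).filter (fun i =>
              1 / ((k : ℝ) + 1) ≤ dist (f (x i)) (x (i + 1))), (1 / ((k : ℝ) + 1)) := by
            rw [Finset.sum_const, nsmul_eq_mul, hCdef]
        _ ≤ ∑ i ∈ (Finset.range m).filter (fun i =>
              1 / ((k : ℝ) + 1) ≤ dist (f (x i)) (x (i + 1))), dist (f (x i)) (x (i + 1)) :=
            Finset.sum_le_sum fun i hi => (Finset.mem_filter.mp hi).2
        _ ≤ S := Finset.sum_le_sum_of_subset_of_nonneg (Finset.filter_subset _ _)
            (fun i _ _ => dist_nonneg)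
    have hC : (C : ℝ) ≤ ((k : ℝ) + 1) * S := by
      rw [mul_one_div, div_le_iff₀ hk1] at hMar
      linarith [hMar]
    have hBc : B * cst = 1 / 2 ^ (k + 2) := by
      rw [hcst, mul_div_cancel₀ _ (ne_of_gt hBpos)]
    have e1 : 2 * (N k : ℝ) * C ≤ 2 * (N k : ℝ) * (((k : ℝ) + 1) * S) :=
      mul_le_mul_of_nonneg_left hC (by positivity)
    have e2 : 2 * (N k : ℝ) * (((k : ℝ) + 1) * S) ≤ B * S := by
      have h9 : 0 ≤ ((k : ℝ) + 1) * S := mul_nonneg hk1.le hSnn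
      nlinarith [h9]
    have e3 : B * S ≤ B * (cst * m) := mul_le_mul_of_nonneg_left hSm.le hBpos.le
    have e4 : B * (cst * m) = (m : ℝ) / 2 ^ (k + 2) := by
      rw [← mul_assoc, hBc]; ring
    linarith
  choose T hT using hTex
  -- block boundaries M
  obtain ⟨M, hM0, hMs⟩ : ∃ M : ℕ → ℕ, M 0 = 0 ∧
      ∀ k, M (k + 1) = M k + N k * (max (T (k + 1)) (N (k + 1)) + 1) :=
    ⟨fun k => Nat.rec 0 (fun j Mj => Mj + N j * (max (T (j + 1)) (N (j + 1)) + 1)) k,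
      rfl, fun k => rfl⟩
  have hMlt : ∀ k, M k < M (k + 1) := by
    intro k
    have h1 : 0 < N k * (max (T (k + 1)) (N (k + 1)) + 1) :=
      Nat.mul_pos (hNpos k) (Nat.succ_pos _)
    have := hMs k; omega
  have hMsm : StrictMono M := strictMono_nat_of_lt_succ hMlt
  have hMk_ge : ∀ k, k ≤ M k := by
    intro k; induction k with
    | zero => omega
    | succ n ih => have := hMlt n; omega
  have hMT : ∀ k, 1 ≤ k → T k ≤ M k := by
    intro k hk
    obtain ⟨j, rfl⟩ : ∃ j, k = j + 1 := ⟨k - 1, by omega⟩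
    have h1 : max (T (j + 1)) (N (j + 1)) + 1 ≤ N j * (max (T (j + 1)) (N (j + 1)) + 1) :=
      Nat.le_mul_of_pos_left _ (hNpos j)
    have h2 : T (j + 1) ≤ max (T (j + 1)) (N (j + 1)) := le_max_left _ _
    have := hMs j; omega
  have hMN : ∀ k, 1 ≤ k → N k ≤ M k := by
    intro k hk
    obtain ⟨j, rfl⟩ : ∃ j, k = j + 1 := ⟨k - 1, by omega⟩
    have h1 : max (T (j + 1)) (N (j + 1)) + 1 ≤ N j * (max (T (j + 1)) (N (j + 1)) + 1) :=
      Nat.le_mul_of_pos_left _ (hNpos j)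
    have h2 : N (j + 1) ≤ max (T (j + 1)) (N (j + 1)) := le_max_right _ _
    have := hMs j; omega
  -- region function
  obtain ⟨reg, hreg1, hreg2⟩ : ∃ r : ℕ → ℕ, (∀ j, M (r j) ≤ j) ∧ (∀ j, j < M (r j + 1)) := by
    refine ⟨fun j => Nat.findGreatest (fun k => M k ≤ j) j, fun j => ?_, fun j => ?_⟩
    · exact Nat.findGreatest_spec (P := fun k => M k ≤ j) (Nat.zero_le j)
        (show M 0 ≤ j by omega)
    · by_contra h
      push_neg at h
      have h2 : Nat.findGreatest (fun k => M k ≤ j) j + 1 ≤ j := le_trans (hMk_ge _) h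
      have h3 := Nat.le_findGreatest (P := fun k => M k ≤ j) h2 h
      omega
  have hreg_ge : ∀ k j, M k ≤ j → k ≤ reg j := by
    intro k j h
    have h2 : M k < M (reg j + 1) := lt_of_le_of_lt h (hreg2 j)
    have := hMsm.lt_iff_lt.mp h2
    omega
  have hreg_eq : ∀ j k, M k ≤ j → j < M (k + 1) → reg j = k := by
    intro j k h1 h2
    have ha := hreg_ge k j h1
    have hb : M (reg j) < M (k + 1) := lt_of_le_of_lt (hreg1 j) h2
    have := hMsm.lt_iff_lt.mp hb
    omega
  -- block start function
  obtain ⟨stt, hsttq, hstt_le, hstt_lt, hstt_add, hsttU⟩ : ∃ stt : ℕ → ℕ,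
      (∀ j, ∃ q, stt j = M (reg j) + N (reg j) * q) ∧
      (∀ j, stt j ≤ j) ∧ (∀ j, j < stt j + N (reg j)) ∧
      (∀ j, stt j + N (reg j) ≤ M (reg j + 1)) ∧
      (∀ j s q, s = M (reg j) + N (reg j) * q → s ≤ j → j < s + N (reg j) → stt j = s) := by
    refine ⟨fun j => M (reg j) + N (reg j) * ((j - M (reg j)) / N (reg j)),
      fun j => ⟨_, rfl⟩, fun j => ?_, fun j => ?_, fun j => ?_, fun j s q hs hs1 hs2 => ?_⟩
    · show M (reg j) + N (reg j) * ((j - M (reg j)) / N (reg j)) ≤ j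
      have h0 := hreg1 j
      have h1 := Nat.div_mul_le_self (j - M (reg j)) (N (reg j))
      have h2 := mul_comm (N (reg j)) ((j - M (reg j)) / N (reg j))
      omega
    · show j < M (reg j) + N (reg j) * ((j - M (reg j)) / N (reg j)) + N (reg j)
      have h0 := hreg1 j
      have h1 := Nat.div_add_mod (j - M (reg j)) (N (reg j))
      have h2 := Nat.mod_lt (j - M (reg j)) (hNpos (reg j))
      omega
    · show M (reg j) + N (reg j) * ((j - M (reg j)) / N (reg j)) + N (reg j) ≤ M (reg j + 1)
      have h0 := hreg1 j
      have h2 := hreg2 j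
      have hMk1 := hMs (reg j)
      have hq : (j - M (reg j)) / N (reg j) < max (T (reg j + 1)) (N (reg j + 1)) + 1 := by
        rw [Nat.div_lt_iff_lt_mul (hNpos _), mul_comm]
        omega
      have h3 : N (reg j) * ((j - M (reg j)) / N (reg j) + 1)
          ≤ N (reg j) * (max (T (reg j + 1)) (N (reg j + 1)) + 1) :=
        Nat.mul_le_mul_left _ (by omega)
      have h4 : N (reg j) * ((j - M (reg j)) / N (reg j) + 1)
          = N (reg j) * ((j - M (reg j)) / N (reg j)) + N (reg j) := by ring
      omega
    · have h0 := hreg1 j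
      have hmc := mul_comm (N (reg j)) q
      have lo : q * N (reg j) ≤ j - M (reg j) := by omega
      have h5 : (q + 1) * N (reg j) = q * N (reg j) + N (reg j) := by ring
      have hi : j - M (reg j) < (q + 1) * N (reg j) := by omega
      have hdiv : (j - M (reg j)) / N (reg j) = q := Nat.div_eq_of_lt_le lo hi
      show M (reg j) + N (reg j) * ((j - M (reg j)) / N (reg j)) = s
      rw [hdiv]; omega
  -- bad blocks and the shadowing sequence y
  obtain ⟨Bad, hBadIff⟩ : ∃ B : ℕ → Prop, ∀ j, B j ↔ ∃ i, stt j ≤ i ∧ i < stt j + N (reg j) ∧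
      1 / ((reg j : ℝ) + 1) ≤ dist (f (x i)) (x (i + 1)) := ⟨_, fun j => Iff.rfl⟩
  obtain ⟨y, hyP, hyN⟩ : ∃ y : ℕ → X,
      (∀ j, Bad j → y j = cc (reg j) (stt j) (j - stt j)) ∧ (∀ j, ¬Bad j → y j = x j) :=
    ⟨fun j => if h : Bad j then cc (reg j) (stt j) (j - stt j) else x j,
      fun j h => dif_pos h, fun j h => dif_neg h⟩
  have hy_start : ∀ j, stt j = j → y j = x j := by
    intro j hj
    by_cases h : Bad j
    · rw [hyP j h, show j - stt j = 0 by omega, hcc0, hj]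
    · exact hyN j h
  -- transitions
  have htrans : ∀ j, dist (f (y j)) (y (j + 1)) < 1 / ((reg j : ℝ) + 1) := by
    intro j
    have hs_le := hstt_le j
    have hs_lt := hstt_lt j
    have hs_add := hstt_add j
    have hsM := hreg1 j
    have hsttM : M (reg j) ≤ stt j := by
      obtain ⟨q, hq⟩ := hsttq j; omega
    by_cases hB : j + 1 < stt j + N (reg j)
    · -- j+1 in the same block
      have hr : reg (j + 1) = reg j :=
        hreg_eq (j + 1) (reg j) (by omega) (lt_of_lt_of_le hB hs_add)
      have hsj : stt (j + 1) = stt j := by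
        obtain ⟨q, hq⟩ := hsttq j
        have := hsttU (j + 1) (stt j) q (by rw [hr]; exact hq) (by omega) (by rw [hr]; omega)
        exact this
      by_cases hbad : Bad j
      · have hbad' : Bad (j + 1) := by
          rw [hBadIff, hr, hsj]; exact (hBadIff j).mp hbad
        rw [hyP j hbad, hyP (j + 1) hbad', hr, hsj,
          show j + 1 - stt j = (j - stt j) + 1 by omega]
        exact hccstep (reg j) (stt j) (j - stt j) (by omega)
      · have hbad' : ¬Bad (j + 1) := by
          rw [hBadIff, hr, hsj]; exact fun h => hbad ((hBadIff j).mpr h)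
        rw [hyN j hbad, hyN (j + 1) hbad']
        by_contra hcon
        push_neg at hcon
        exact hbad ((hBadIff j).mpr ⟨j, by omega, by omega, hcon⟩)
    · -- j+1 is the start of the next block
      have hj1 : j + 1 = stt j + N (reg j) := by omega
      have hy1 : y (j + 1) = x (j + 1) := by
        apply hy_start
        rcases Nat.lt_or_ge (j + 1) (M (reg j + 1)) with hlt | hge
        · have hr : reg (j + 1) = reg j := hreg_eq (j + 1) (reg j) (by omega) hlt
          obtain ⟨q, hq⟩ := hsttq j
          exact hsttU (j + 1) (j + 1) (q + 1)
            (by rw [hr]; rw [hj1, hq]; ring) le_rfl (by have := hNpos (reg (j + 1)); omega)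
        · have hj2 : j + 1 = M (reg j + 1) := by omega
          have hr : reg (j + 1) = reg j + 1 :=
            hreg_eq (j + 1) (reg j + 1) (by omega) (by rw [hj2]; exact hMlt _)
          exact hsttU (j + 1) (j + 1) 0 (by rw [hr, hj2]; ring) le_rfl
            (by have := hNpos (reg (j + 1)); omega)
      by_cases hbad : Bad j
      · rw [hyP j hbad, hy1, show j - stt j = N (reg j) - 1 by omega,
          show j + 1 = stt j + N (reg j) from hj1, ← hccN (reg j) (stt j)]
        have := hccstep (reg j) (stt j) (N (reg j) - 1) (by have := hNpos (reg j); omega)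
        rwa [show N (reg j) - 1 + 1 = N (reg j) by have := hNpos (reg j); omega] at this
      · rw [hyN j hbad, hy1]
        by_contra hcon
        push_neg at hcon
        exact hbad ((hBadIff j).mpr ⟨j, by omega, by omega, hcon⟩)
  refine ⟨y, ?_, ?_⟩
  · -- asymptotic pseudo-orbit
    rw [Metric.tendsto_atTop]
    intro ε hε
    obtain ⟨k₀, hk₀⟩ := exists_nat_one_div_lt hε
    refine ⟨M k₀, fun j hj => ?_⟩
    rw [Real.dist_eq, sub_zero, abs_of_nonneg dist_nonneg]
    have h1 : k₀ ≤ reg j := hreg_ge k₀ j hj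
    have h2 : 1 / ((reg j : ℝ) + 1) ≤ 1 / ((k₀ : ℝ) + 1) := by
      apply one_div_le_one_div_of_le (by positivity)
      have : (k₀ : ℝ) ≤ (reg j : ℝ) := by exact_mod_cast h1
      linarith
    exact lt_of_lt_of_le (htrans j) (le_trans h2 hk₀.le)
  · -- density zero
    have hA : ∀ k, 1 ≤ k → ∀ n, M k ≤ n → n ≤ M (k + 1) →
        (((Finset.range n).filter fun j => x j ≠ y j).card : ℝ)
          ≤ (((Finset.range (M k)).filter fun j => x j ≠ y j).card : ℝ)
            + n * ((1 : ℝ) / 2) ^ (k + 1) := by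
      intro k hk n hn1 hn2
      have hsplit : ((Finset.range n).filter fun j => x j ≠ y j).card
          ≤ ((Finset.range (M k)).filter fun j => x j ≠ y j).card
            + ((Finset.Ico (M k) n).filter fun j => x j ≠ y j).card := by
        have hru : Finset.range n = Finset.range (M k) ∪ Finset.Ico (M k) n := by
          ext i
          simp only [Finset.mem_range, Finset.mem_union, Finset.mem_Ico]
          omega
        rw [hru, Finset.filter_union]
        exact Finset.card_union_le _ _
      set V := (Finset.range (n + N k)).filter
        (fun i => 1 / ((k : ℝ) + 1) ≤ dist (f (x i)) (x (i + 1))) with hVdef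
      have hsub : (Finset.Ico (M k) n).filter (fun j => x j ≠ y j) ⊆
          V.biUnion (fun i => Finset.Ico (i + 1 - N k) (i + N k)) := by
        intro j hj
        obtain ⟨hj1, hj2⟩ := Finset.mem_filter.mp hj
        obtain ⟨hjM, hjn⟩ := Finset.mem_Ico.mp hj1
        have hrj : reg j = k := hreg_eq j k hjM (lt_of_lt_of_le hjn hn2)
        have hbad : Bad j := by
          by_contra h
          exact hj2 (hyN j h).symm
        obtain ⟨i, hi1, hi2, hi3⟩ := (hBadIff j).mp hbad
        rw [hrj] at hi2 hi3
        have hsj1 := hstt_le j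
        refine Finset.mem_biUnion.mpr ⟨i, Finset.mem_filter.mpr ⟨Finset.mem_range.mpr ?_, hi3⟩,
          Finset.mem_Ico.mpr ⟨?_, ?_⟩⟩
        · omega
        · omega
        · have := hstt_lt j
          rw [hrj] at this
          omega
      have hcard2 : ((Finset.Ico (M k) n).filter fun j => x j ≠ y j).card ≤ V.card * (2 * N k) := by
        calc ((Finset.Ico (M k) n).filter fun j => x j ≠ y j).card
            ≤ (V.biUnion (fun i => Finset.Ico (i + 1 - N k) (i + N k))).card :=
              Finset.card_le_card hsub
          _ ≤ ∑ i ∈ V, (Finset.Ico (i + 1 - N k) (i + N k)).card := Finset.card_biUnion_le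
          _ ≤ ∑ _i ∈ V, (2 * N k) := Finset.sum_le_sum fun i _ => by
              rw [Nat.card_Ico]; omega
          _ = V.card * (2 * N k) := by rw [Finset.sum_const, smul_eq_mul]
      have hTk : T k ≤ n + N k := le_trans (hMT k hk) (by omega)
      have hV := hT k (n + N k) hTk
      have hNn : N k ≤ n := le_trans (hMN k hk) hn1
      have hc2R : (((Finset.Ico (M k) n).filter fun j => x j ≠ y j).card : ℝ)
          ≤ 2 * (N k : ℝ) * V.card := by
        have := hcard2
        push_cast
        calc (((Finset.Ico (M k) n).filter fun j => x j ≠ y j).card : ℝ)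
            ≤ ((V.card * (2 * N k) : ℕ) : ℝ) := by exact_mod_cast this
          _ = 2 * (N k : ℝ) * V.card := by push_cast; ring
      have hfin : 2 * (N k : ℝ) * V.card ≤ n * ((1 : ℝ) / 2) ^ (k + 1) := by
        refine le_trans hV ?_
        have hNnR : (N k : ℝ) ≤ n := by exact_mod_cast hNn
        have h1 : ((n + N k : ℕ) : ℝ) ≤ 2 * n := by push_cast; linarith
        have h3 : ((n + N k : ℕ) : ℝ) / 2 ^ (k + 2) ≤ (2 * n) / 2 ^ (k + 2) := by gcongr
        refine le_trans h3 (le_of_eq ?_)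
        rw [div_pow, one_pow, pow_succ]
        have h5 : (0:ℝ) < 2 ^ (k + 1) := by positivity
        field_simp
      have hsplitR : (((Finset.range n).filter fun j => x j ≠ y j).card : ℝ)
          ≤ (((Finset.range (M k)).filter fun j => x j ≠ y j).card : ℝ)
            + (((Finset.Ico (M k) n).filter fun j => x j ≠ y j).card : ℝ) := by
        exact_mod_cast hsplit
      linarith
    -- telescoped bound
    have hCle : ∀ k₀, 1 ≤ k₀ → ∀ k, k₀ ≤ k →
        (((Finset.range (M k)).filter fun j => x j ≠ y j).card : ℝ)
          ≤ (((Finset.range (M k₀)).filter fun j => x j ≠ y j).card : ℝ)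
            + M k * (((1 : ℝ) / 2) ^ k₀ - ((1 : ℝ) / 2) ^ k) := by
      intro k₀ hk₀
      refine Nat.le_induction ?_ ?_
      · simp
      · intro k hk ih
        have hstep := hA k (le_trans hk₀ hk) (M (k + 1)) (le_of_lt (hMlt k)) le_rfl
        have hMle : (M k : ℝ) ≤ M (k + 1) := by exact_mod_cast (hMlt k).le
        have hple : ((1 : ℝ) / 2) ^ k ≤ ((1 : ℝ) / 2) ^ k₀ :=
          pow_le_pow_of_le_one (by norm_num) (by norm_num) hk
        have hpk : ((1 : ℝ) / 2) ^ (k + 1) = ((1 : ℝ) / 2) ^ k * (1 / 2) := pow_succ _ _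
        have key : (M k : ℝ) * (((1 : ℝ) / 2) ^ k₀ - ((1 : ℝ) / 2) ^ k)
            ≤ (M (k + 1) : ℝ) * (((1 : ℝ) / 2) ^ k₀ - ((1 : ℝ) / 2) ^ k) :=
          mul_le_mul_of_nonneg_right hMle (by linarith)
        rw [hpk] at hstep ⊢
        linarith
    -- finish
    have hncard : ∀ n : ℕ, ({j | x j ≠ y j} ∩ Set.Iio n).ncard
        = ((Finset.range n).filter fun j => x j ≠ y j).card := by
      intro n
      rw [show {j | x j ≠ y j} ∩ Set.Iio n
          = ↑((Finset.range n).filter fun j => x j ≠ y j) by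
        ext j
        simp only [Set.mem_inter_iff, Set.mem_setOf_eq, Set.mem_Iio, Finset.coe_filter,
          Finset.mem_range]
        tauto]
      rw [Set.ncard_coe_finset]
    rw [HasDensity]
    rw [Metric.tendsto_atTop]
    intro ε hε
    obtain ⟨k₁, hk₁⟩ := exists_pow_lt_of_lt_one (show (0 : ℝ) < ε / 4 by linarith)
      (show (1 : ℝ) / 2 < 1 by norm_num)
    set k₀ := k₁ + 1 with hk₀def
    have hk₀pow : ((1 : ℝ) / 2) ^ k₀ < ε / 4 := by
      refine lt_of_le_of_lt ?_ hk₁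
      exact pow_le_pow_of_le_one (by norm_num) (by norm_num) (by omega)
    obtain ⟨K1, hK1⟩ := exists_nat_gt ((M k₀ : ℝ) * 2 / ε)
    refine ⟨max (max K1 (M k₀)) 1, fun n hn => ?_⟩
    have hn1 : 1 ≤ n := by omega
    have hnK : K1 ≤ n := by omega
    have hnM : M k₀ ≤ n := by omega
    have hnR : (0 : ℝ) < n := by exact_mod_cast hn1
    have hkk : k₀ ≤ reg n := hreg_ge k₀ n hnM
    have h1 := hA (reg n) (by omega) n (hreg1 n) (le_of_lt (hreg2 n))
    have h2 := hCle k₀ (by omega) (reg n) hkk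
    have h3 : (((Finset.range (M k₀)).filter fun j => x j ≠ y j).card : ℝ) ≤ M k₀ := by
      have := le_trans (Finset.card_filter_le (Finset.range (M k₀)) (fun j => x j ≠ y j))
        (le_of_eq (Finset.card_range (M k₀)))
      exact_mod_cast this
    have h4 : (M (reg n) : ℝ) ≤ n := by exact_mod_cast hreg1 n
    have h6 : ((1 : ℝ) / 2) ^ (reg n + 1) ≤ ((1 : ℝ) / 2) ^ k₀ :=
      pow_le_pow_of_le_one (by norm_num) (by norm_num) (by omega)
    have h7 : (M k₀ : ℝ) < n * ε / 2 := by
      have : (M k₀ : ℝ) * 2 / ε < n := lt_of_lt_of_le hK1 (by exact_mod_cast hnK)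
      rw [div_lt_iff₀ (by linarith : (0 : ℝ) < ε)] at this
      linarith
    have hsub0 : (0 : ℝ) ≤ ((1 : ℝ) / 2) ^ k₀ - ((1 : ℝ) / 2) ^ (reg n) :=
      sub_nonneg.mpr (pow_le_pow_of_le_one (by norm_num) (by norm_num) hkk)
    have h5 : (M (reg n) : ℝ) * (((1 : ℝ) / 2) ^ k₀ - ((1 : ℝ) / 2) ^ (reg n))
        ≤ n * ((1 : ℝ) / 2) ^ k₀ := by
      have hs1 : (((1 : ℝ) / 2) ^ k₀ - ((1 : ℝ) / 2) ^ (reg n)) ≤ ((1 : ℝ) / 2) ^ k₀ := by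
        have : (0 : ℝ) ≤ ((1 : ℝ) / 2) ^ (reg n) := by positivity
        linarith
      calc (M (reg n) : ℝ) * (((1 : ℝ) / 2) ^ k₀ - ((1 : ℝ) / 2) ^ (reg n))
          ≤ (n : ℝ) * (((1 : ℝ) / 2) ^ k₀ - ((1 : ℝ) / 2) ^ (reg n)) :=
            mul_le_mul_of_nonneg_right h4 hsub0
        _ ≤ n * ((1 : ℝ) / 2) ^ k₀ := mul_le_mul_of_nonneg_left hs1 hnR.le
    have h8 : (n : ℝ) * ((1 : ℝ) / 2) ^ (reg n + 1) ≤ n * ((1 : ℝ) / 2) ^ k₀ :=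
      mul_le_mul_of_nonneg_left h6 hnR.le
    have h9 : (n : ℝ) * ((1 : ℝ) / 2) ^ k₀ ≤ n * (ε / 4) :=
      mul_le_mul_of_nonneg_left hk₀pow.le hnR.le
    have hDn : (((Finset.range n).filter fun j => x j ≠ y j).card : ℝ) < n * ε := by
      calc (((Finset.range n).filter fun j => x j ≠ y j).card : ℝ)
          ≤ (((Finset.range (M (reg n))).filter fun j => x j ≠ y j).card : ℝ)
            + n * ((1 : ℝ) / 2) ^ (reg n + 1) := h1
        _ ≤ (((Finset.range (M k₀)).filter fun j => x j ≠ y j).card : ℝ)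
            + M (reg n) * (((1 : ℝ) / 2) ^ k₀ - ((1 : ℝ) / 2) ^ (reg n))
            + n * ((1 : ℝ) / 2) ^ (reg n + 1) := by linarith
        _ ≤ (M k₀ : ℝ) + n * ((1 : ℝ) / 2) ^ k₀ + n * ((1 : ℝ) / 2) ^ k₀ := by linarith
        _ < n * ε / 2 + n * (ε / 4) + n * (ε / 4) := by linarith
        _ = n * ε := by ring
    rw [hncard n, Real.dist_eq, sub_zero, abs_of_nonneg (div_nonneg (Nat.cast_nonneg _) (Nat.cast_nonneg _))]
    rw [div_lt_iff₀ hnR]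
    linarith
end
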